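/- arXiv:0805.1872 — 10 statements merged into one kernel-verified Lean document; each statement's English description precedes it below -/
import Mathlib

section
/- A permutation π = π_ℓ n π_r of {1,...,n} (where n is the largest element, π_ℓ is the part to the left of n and π_r the part to the right) avoids the generalized pattern k-σ (σ a contiguous pattern, k larger than every letter of σ) if and only if π_ℓ avoids k-σ and π_r avoids σ. -/
/-- `l` is a permutation of `{1, …, n}`. -/
def IsPermOf (n : ℕ) (l : List ℕ) : Prop :=
  l.Perm ((List.range n).map (· + 1))

/-- The word `w` forms (is an occurrence, using all its entries, of) the
partially ordered pattern `σ`. -/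
def FormsPOP (σ w : List ℕ) : Prop :=
  w.length = σ.length ∧
  ∀ i j, i < σ.length → j < σ.length →
    σ.getD i 0 < σ.getD j 0 → w.getD i 0 < w.getD j 0

/-- `π` contains an occurrence of the contiguous pattern `σ`. -/
def OccursContig (σ π : List ℕ) : Prop :=
  ∃ A w B, π = A ++ w ++ B ∧ FormsPOP σ w

/-- `π` contains an occurrence of the pattern `k-σ`, where `k` is larger than all
letters of `σ`: an element to the left of, and greater than all elements of, a
consecutive occurrence of `σ`. -/
def OccursKS (σ π : List ℕ) : Prop :=
  ∃ A x B w C, π = A ++ x :: (B ++ w ++ C) ∧ FormsPOP σ w ∧ ∀ y ∈ w, y < x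

lemma append_split {α : Type*} {X Y U V : List α} (h : X ++ Y = U ++ V)
    (hl : U.length ≤ X.length) : ∃ t, X = U ++ t ∧ V = t ++ Y := by
  rcases List.append_eq_append_iff.1 h with ⟨a', h1, h2⟩ | ⟨c', h1, h2⟩
  · have ha : a' = [] := by
      have := congrArg List.length h1
      simp at this
      cases a' with
      | nil => rfl
      | cons b bs => simp at this; omega
    subst ha
    simp at h1 h2
    exact ⟨[], by simp [h1], by simp [h2]⟩
  · exact ⟨c', h1, h2⟩

theorem avoid_ks_split (σ : List ℕ) (hσ : σ ≠ []) (n : ℕ) (l r : List ℕ)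
    (hperm : IsPermOf n (l ++ n :: r)) :
    ¬ OccursKS σ (l ++ n :: r) ↔ (¬ OccursKS σ l ∧ ¬ OccursContig σ r) := by
  have hnd : (l ++ n :: r).Nodup := by
    refine hperm.nodup_iff.2 ?_
    exact (List.nodup_range).map (fun a b h => by omega)
  have hub : ∀ y ∈ l ++ n :: r, y ≤ n := by
    intro y hy
    have := hperm.mem_iff.1 hy
    simp only [List.mem_map, List.mem_range] at this
    obtain ⟨i, hi, rfl⟩ := this
    omega
  have hnr : n ∉ r := by
    have h1 : (n :: r).Nodup := hnd.of_append_right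
    exact (List.nodup_cons.1 h1).1
  have hr : ∀ y ∈ r, y < n := fun y hy =>
    lt_of_le_of_ne (hub y (by simp [hy])) (by rintro rfl; exact hnr hy)
  constructor
  · intro hav
    constructor
    · rintro ⟨A, x, B, w, C, heq, hw, hlt⟩
      exact hav ⟨A, x, B, w, C ++ n :: r, by rw [heq]; simp, hw, hlt⟩
    · rintro ⟨A, w, B, heq, hw⟩
      exact hav ⟨l, n, A, w, B, by rw [heq], hw,
        fun y hy => hr y (by rw [heq]; simp [hy])⟩
  · rintro ⟨hl', hr'⟩ ⟨A, x, B, w, C, heq, hw, hlt⟩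
    have heq' : l ++ (n :: r) = (A ++ x :: B) ++ (w ++ C) := by rw [heq]; simp
    by_cases h1 : (A ++ x :: B).length + w.length ≤ l.length
    · obtain ⟨t, htl, -⟩ :=
        append_split (X := l) (Y := n :: r) (U := (A ++ x :: B) ++ w) (V := C)
          (by rw [heq']; simp) (by simp at h1 ⊢; omega)
      exact hl' ⟨A, x, B, w, t, by rw [htl]; simp, hw, hlt⟩
    · by_cases h2 : l.length + 1 ≤ (A ++ x :: B).length
      · obtain ⟨t, -, htr⟩ :=
          append_split (X := A ++ x :: B) (Y := w ++ C) (U := l ++ [n]) (V := r)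
            (by rw [← heq']; simp) (by simp at h2 ⊢; omega)
        exact hr' ⟨t, w, C, by rw [htr, List.append_assoc], hw⟩
      · obtain ⟨t, htl, htw⟩ :=
          append_split (X := l) (Y := n :: r) (U := A ++ x :: B) (V := w ++ C)
            heq' (by omega)
        have htlen : t.length < w.length := by
          have := congrArg List.length htl
          simp at this
          simp at h1 h2
          omega
        obtain ⟨s, hws, hsr⟩ :=
          append_split (X := w) (Y := C) (U := t) (V := n :: r) htw (le_of_lt htlen)
        cases s with
        | nil =>
          have := congrArg List.length hws
          simp at this; omega
        | cons a s' =>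
          have ha : a = n := by
            rw [List.cons_append] at hsr
            exact (List.cons.injEq _ _ _ _ ▸ hsr).1.symm
          have hnw : n ∈ w := by rw [hws, ha]; simp
          have hxmem : x ∈ l ++ n :: r := by rw [heq]; simp
          have := hlt n hnw
          have := hub x hxmem
          omega
end

section
/- A permutation π = π_ℓ n π_r of {1,...,n} avoids the pattern k-σ-k (σ contiguous, k larger than every letter of σ) if and only if π_ℓ avoids k-σ and π_r avoids σ-k. -/
/-- occurrence of `σ-k`: a large element to the right of a consecutive occurrence of `σ`. -/
def OccursSK (σ π : List ℕ) : Prop :=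
  ∃ A w B x C, π = A ++ w ++ B ++ x :: C ∧ FormsPOP σ w ∧ ∀ y ∈ w, y < x

/-- occurrence of `k-σ-k`: a consecutive occurrence of `σ` with a larger element on
each side. -/
def OccursKSK (σ π : List ℕ) : Prop :=
  ∃ A x B w C y D, π = A ++ x :: (B ++ w ++ C ++ y :: D) ∧ FormsPOP σ w ∧
    (∀ z ∈ w, z < x) ∧ (∀ z ∈ w, z < y)

theorem avoid_ksk_split (σ : List ℕ) (hσ : σ ≠ []) (n : ℕ) (l r : List ℕ)
    (hperm : IsPermOf n (l ++ n :: r)) :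
    ¬ OccursKSK σ (l ++ n :: r) ↔ (¬ OccursKS σ l ∧ ¬ OccursSK σ r) := by
  have hle : ∀ x ∈ l ++ n :: r, x ≤ n := by
    intro x hx
    have hx' := hperm.subset hx
    simp only [List.mem_map, List.mem_range] at hx'
    omega
  constructor
  · intro hksk
    constructor
    · rintro ⟨A, x, B, w, C, hl, hpop, hw⟩
      apply hksk
      refine ⟨A, x, B, w, C, n, r, ?_, hpop, hw, ?_⟩
      · rw [hl]; simp
      · intro z hz
        have hx : x ≤ n := hle x (by rw [hl]; simp)
        exact lt_of_lt_of_le (hw z hz) hx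
    · rintro ⟨A, w, B, x, C, hr, hpop, hw⟩
      apply hksk
      refine ⟨l, n, A, w, B, x, C, ?_, hpop, ?_, hw⟩
      · rw [hr]
      · intro z hz
        have hx : x ≤ n := hle x (by rw [hr]; simp)
        exact lt_of_lt_of_le (hw z hz) hx
  · rintro ⟨h1, h2⟩ ⟨A, x, B, w, C, y, D, heq, hpop, hwx, hwy⟩
    have heq' : l ++ n :: r = (A ++ x :: B) ++ w ++ (C ++ y :: D) := by
      rw [heq]; simp
    set u := A ++ x :: B with hu
    rcases le_or_gt (u.length + w.length) l.length with hlen | hlen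
    · -- w entirely inside l
      have hp1 : (u ++ w) <+: (l ++ n :: r) := ⟨C ++ y :: D, by rw [heq']⟩
      have hp2 : l <+: (l ++ n :: r) := l.prefix_append _
      have hp : (u ++ w) <+: l :=
        List.prefix_of_prefix_length_le hp1 hp2 (by simpa using hlen)
      obtain ⟨t, ht⟩ := hp
      exact h1 ⟨A, x, B, w, t, by rw [← ht, hu]; simp, hpop, hwx⟩
    rcases le_or_gt (l.length + 1) u.length with hlen2 | hlen2
    · -- w entirely inside r
      have hp1 : (l ++ [n]) <+: (l ++ n :: r) := ⟨r, by simp⟩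
      have hp2 : u <+: (l ++ n :: r) := ⟨w ++ (C ++ y :: D), by rw [heq']; simp⟩
      have hp : (l ++ [n]) <+: u :=
        List.prefix_of_prefix_length_le hp1 hp2 (by simpa using hlen2)
      obtain ⟨s, hs⟩ := hp
      have hr : l ++ n :: r = l ++ n :: (s ++ (w ++ (C ++ y :: D))) := by
        rw [heq', ← hs]; simp
      have hr2 : r = s ++ w ++ C ++ y :: D := by
        have := List.append_cancel_left hr
        simpa using this
      exact h2 ⟨s, w, C, y, D, hr2, hpop, hwy⟩
    · -- n inside w: contradiction
      exfalso
      have hulen : u.length ≤ l.length := by omega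
      have hlt : l.length - u.length < w.length := by omega
      have hA : (l ++ n :: r)[l.length]? = some n := by
        rw [List.getElem?_append_right (le_refl _)]
        simp
      have hB : (l ++ n :: r)[l.length]? = w[l.length - u.length]? := by
        rw [heq', List.append_assoc, List.getElem?_append_right hulen,
          List.getElem?_append_left hlt]
      have hmem : n ∈ w := by
        rw [hA, List.getElem?_eq_getElem hlt] at hB
        exact (Option.some_injective _ hB) ▸ List.getElem_mem _
      have hx : x ≤ n := hle x (by rw [heq]; simp)
      have := hwx n hmem
      omega
end

section
/- Let π = M_1 π_1 M_2 π_2 ... M_i π_i where M_1,...,M_i are the left-to-right maxima of π and π_1,...,π_i the (possibly empty) blocks following them. Then π avoids the pattern k-σ (σ contiguous, k greater than all letters of σ) if and only if each block π_j avoids the contiguous pattern σ. -/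
lemma flatten_split : ∀ (l : List (List ℕ)) (A R : List ℕ) (x : ℕ),
    l.flatten = A ++ x :: R →
    ∃ lp c₁ c₂ ls, l = lp ++ (c₁ ++ x :: c₂) :: ls ∧
      A = lp.flatten ++ c₁ ∧ R = c₂ ++ ls.flatten := by
  intro l
  induction l with
  | nil => intro A R x h; simp at h
  | cons c l' ih =>
    intro A R x h
    rw [List.flatten_cons] at h
    rcases List.append_eq_append_iff.mp h with ⟨a', h1, h2⟩ | ⟨c', h1, h2⟩
    · obtain ⟨lp, c₁, c₂, ls, e1, e2, e3⟩ := ih a' R x h2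
      exact ⟨c :: lp, c₁, c₂, ls, by rw [e1]; simp, by rw [h1, e2]; simp, e3⟩
    · cases c' with
      | nil =>
        simp at h1 h2
        obtain ⟨lp, c₁, c₂, ls, e1, e2, e3⟩ := ih [] R x h2.symm
        obtain ⟨hf, hc1⟩ := List.append_eq_nil_iff.mp e2.symm
        exact ⟨c :: lp, c₁, c₂, ls, by rw [e1]; simp, by simp [hc1, hf, h1], e3⟩
      | cons hd tl =>
        simp at h2
        obtain ⟨hhd, hR⟩ := h2
        exact ⟨[], A, tl, l', by simp [h1, hhd], by simp, hR⟩

lemma infix_blocks (w : List ℕ) (hw : w ≠ []) :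
    ∀ (L : List (ℕ × List ℕ)) (b₀ : List ℕ),
    (∀ p ∈ L, ∀ y ∈ w, y < p.1) →
    w <:+: (b₀ ++ (L.map fun p => p.1 :: p.2).flatten) →
    w <:+: b₀ ∨ ∃ p ∈ L, w <:+: p.2 := by
  intro L
  induction L with
  | nil => intro b₀ _ h; simp at h; exact Or.inl h
  | cons q L' ih =>
    intro b₀ hc h
    obtain ⟨m, b⟩ := q
    obtain ⟨s, t, hst⟩ := h
    simp only [List.map_cons, List.flatten_cons] at hst
    have hmw : m ∉ w := by
      intro hmem
      exact absurd (hc (m, b) List.mem_cons_self m hmem) (lt_irrefl m)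
    rw [List.append_assoc] at hst
    rcases List.append_eq_append_iff.mp hst with ⟨a', h1, h2⟩ | ⟨c', h1, h2⟩
    · -- b₀ = s ++ a', w ++ t = a' ++ (m :: b ++ rest)
      rcases List.append_eq_append_iff.mp h2 with ⟨a'', g1, g2⟩ | ⟨c'', g1, g2⟩
      · exact Or.inl ((List.IsPrefix.isInfix ⟨a'', g1.symm⟩).trans
          (List.IsSuffix.isInfix ⟨s, h1.symm⟩))
      · cases c'' with
        | nil =>
          simp at g1
          exact Or.inl (List.IsSuffix.isInfix ⟨s, by rw [h1, g1]⟩)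
        | cons hd tl =>
          have hhd : hd = m := by
            have := congrArg (List.headI) g2
            simpa using this.symm
          exact absurd (by rw [g1, hhd]; simp : m ∈ w) hmw
    · -- s = b₀ ++ c', m :: b ++ rest = c' ++ (w ++ t)
      cases c' with
      | nil =>
        simp at h2
        have hm : m ∈ w := by
          cases w with
          | nil => exact absurd rfl hw
          | cons a l =>
            have : m = a := by
              have := congrArg (List.headI) h2
              simpa using this
            simp [this]
        exact absurd hm hmw
      | cons hd tl =>
        simp at h2
        obtain ⟨-, h2⟩ := h2
        have hinf : w <:+: (b ++ (L'.map fun p => p.1 :: p.2).flatten) :=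
          ⟨tl, t, by rw [List.append_assoc]; exact h2.symm⟩
        rcases ih b (fun p hp => hc p (List.mem_cons_of_mem _ hp)) hinf with h | ⟨p, hp, hpw⟩
        · exact Or.inr ⟨(m, b), List.mem_cons_self, h⟩
        · exact Or.inr ⟨p, List.mem_cons_of_mem _ hp, hpw⟩

/-- If `π = M₁π₁M₂π₂⋯Mᵢπᵢ`, where the `Mⱼ` are the left-to-right maxima of `π`
(`M` is strictly increasing, every entry of a block is smaller than the maxima at
or before it), then `π` avoids `k-σ` iff every block `πⱼ` avoids the contiguous
pattern `σ`. -/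
theorem avoid_ks_iff_blocks (σ : List ℕ) (hσ : σ ≠ []) (N i : ℕ)
    (M : Fin i → ℕ) (B : Fin i → List ℕ) (π : List ℕ)
    (hπ : π = (List.ofFn fun j => M j :: B j).flatten)
    (hperm : IsPermOf N π)
    (hM : StrictMono M)
    (hB : ∀ j' j : Fin i, j' ≤ j → ∀ x ∈ B j', x < M j) :
    ¬ OccursKS σ π ↔ ∀ j : Fin i, ¬ OccursContig σ (B j) := by
  subst hπ
  constructor
  · intro hks j hocc
    obtain ⟨A, w, Bt, hBj, hpop⟩ := hocc
    apply hks
    have hj : (j : ℕ) < (List.ofFn fun j => M j :: B j).length := by simp [j.isLt]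
    have hdec : (List.ofFn fun j => M j :: B j) =
        ((List.ofFn fun j => M j :: B j).take (j : ℕ)) ++ (M j :: B j) ::
        ((List.ofFn fun j => M j :: B j).drop ((j : ℕ) + 1)) := by
      conv_lhs => rw [← List.take_append_drop (j : ℕ) (List.ofFn fun j => M j :: B j)]
      rw [List.drop_eq_getElem_cons hj, List.getElem_ofFn]
    refine ⟨((List.ofFn fun j => M j :: B j).take (j : ℕ)).flatten, M j, A, w,
      Bt ++ ((List.ofFn fun j => M j :: B j).drop ((j : ℕ) + 1)).flatten, ?_, hpop, ?_⟩
    · conv_lhs => rw [hdec]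
      simp [hBj]
    · intro y hy
      exact hB j j le_rfl y (by rw [hBj]; simp [hy])
  · rintro hall ⟨A, x, Bl, w, C, hdec, hpop, hlt⟩
    have hw : w ≠ [] := by
      intro h
      rw [h] at hpop
      exact hσ (List.length_eq_zero_iff.mp hpop.1.symm)
    obtain ⟨lp, c₁, c₂, ls, hl, hA, hR⟩ := flatten_split _ _ _ _ hdec
    have hilen : i = lp.length + 1 + ls.length := by
      have := congrArg List.length hl
      simp at this
      omega
    have hlen : lp.length < i := by omega
    set jn : Fin i := ⟨lp.length, hlen⟩ with hjn
    have hblk : M jn :: B jn = c₁ ++ x :: c₂ := by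
      have h2 : (lp ++ (c₁ ++ x :: c₂) :: ls)[lp.length]'(by simp) = c₁ ++ x :: c₂ := by
        rw [List.getElem_append_right (le_refl _)]
        simp
      have h3 : (List.ofFn fun j => M j :: B j)[lp.length]'(by simp [hlen]) =
          M jn :: B jn := by
        rw [List.getElem_ofFn]
      rw [← h3, ← h2]
      exact List.getElem_of_eq hl _
    have hkey : x ≤ M jn ∧ c₂ <:+ B jn := by
      cases c₁ with
      | nil =>
        simp at hblk
        exact ⟨le_of_eq hblk.1.symm, hblk.2 ▸ List.suffix_refl _⟩
      | cons h t =>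
        simp at hblk
        refine ⟨le_of_lt (hB jn jn le_rfl x ?_), ⟨t ++ [x], by rw [hblk.2]; simp⟩⟩
        rw [hblk.2]
        simp
    have hls : ls = (List.ofFn fun j => M j :: B j).drop (lp.length + 1) := by
      rw [hl]
      have := List.drop_length_add_append (l₁ := lp) (l₂ := (c₁ ++ x :: c₂) :: ls) 1
      exact this.symm
    have hmem : ∀ c ∈ ls, ∃ j' : Fin i, lp.length < (j' : ℕ) ∧ c = M j' :: B j' := by
      intro c hc
      obtain ⟨tn, htn, hget⟩ := List.mem_iff_getElem.mp hc
      have hb : lp.length + 1 + tn < i := by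
        have : tn < ls.length := htn
        omega
      refine ⟨⟨lp.length + 1 + tn, hb⟩, by simp; omega, ?_⟩
      rw [← hget]
      have : ls[tn]'htn =
          (List.ofFn fun j => M j :: B j)[lp.length + 1 + tn]'(by simp [hb]) := by
        rw [List.getElem_of_eq hls htn]
        exact List.getElem_drop
      rw [this, List.getElem_ofFn]
    set L : List (ℕ × List ℕ) := ls.map (fun c => (c.headI, c.tail)) with hL
    have hlsL : ls = L.map fun p => p.1 :: p.2 := by
      rw [hL, List.map_map]
      conv_lhs => rw [← List.map_id ls]
      apply List.map_congr_left
      intro c hc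
      obtain ⟨j', _, hcj⟩ := hmem c hc
      subst hcj
      simp
    have hcond : ∀ p ∈ L, ∀ y ∈ w, y < p.1 := by
      intro p hp y hy
      obtain ⟨c, hc, rfl⟩ := List.mem_map.mp hp
      obtain ⟨j', hj', hcj⟩ := hmem c hc
      subst hcj
      simp only [List.headI_cons]
      calc y < x := hlt y hy
        _ ≤ M jn := hkey.1
        _ < M j' := hM (show jn < j' from hj')
    have hwin : w <:+: (c₂ ++ (L.map fun p => p.1 :: p.2).flatten) := by
      rw [← hlsL, ← hR]
      exact ⟨Bl, C, rfl⟩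
    rcases infix_blocks w hw L c₂ hcond hwin with h | ⟨p, hp, hpw⟩
    · obtain ⟨s, t, hst⟩ := h.trans hkey.2.isInfix
      exact hall jn ⟨s, w, t, hst.symm, hpop⟩
    · obtain ⟨c, hc, rfl⟩ := List.mem_map.mp hp
      obtain ⟨j', -, hcj⟩ := hmem c hc
      subst hcj
      obtain ⟨s, t, hst⟩ := hpw
      exact hall j' ⟨s, w, t, by simpa using hst.symm, hpop⟩
end

section
/- A permutation π avoids the generalized pattern 3-12 if and only if π is a concatenation of decreasing sequences in which the first element of each decreasing sequence is greater than the first element of the preceding decreasing sequence. -/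
/-- Occurrence of the generalized pattern `3-12` in `π`:
indices `i < j, j+1` with `π j < π (j+1) < π i`. -/
def Occ312 (π : List ℕ) : Prop :=
  ∃ i j, i < j ∧ j + 1 < π.length ∧
    π.getD j 0 < π.getD (j + 1) 0 ∧ π.getD (j + 1) 0 < π.getD i 0

namespace Avoid312Aux

/-- add one element to the front of a run decomposition -/
def push (a : ℕ) : List (List ℕ) → List (List ℕ)
  | [] => [[a]]
  | r :: rs => if r.headD 0 < a then (a :: r) :: rs else [a] :: r :: rs

/-- decomposition of a list into maximal decreasing runs -/
def runs : List ℕ → List (List ℕ)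
  | [] => []
  | a :: l => push a (runs l)

lemma headD_eq_getD (l : List ℕ) (d : ℕ) : l.headD d = l.getD 0 d := by
  cases l <;> rfl

lemma headD_mem {r : List ℕ} (h : r ≠ []) (d : ℕ) : r.headD d ∈ r := by
  cases r with
  | nil => simp at h
  | cons b t => simp

lemma getLastD_irrel {r : List ℕ} (h : r ≠ []) (d d' : ℕ) :
    r.getLastD d = r.getLastD d' := by
  cases r with
  | nil => simp at h
  | cons b t => rfl

lemma getD_cons_last : ∀ (r : List ℕ) (a d : ℕ),
    (a :: r).getD r.length d = r.getLastD a := by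
  intro r
  induction r with
  | nil => intro a d; rfl
  | cons b t ih =>
    intro a d
    show (a :: b :: t).getD (t.length + 1) d = (b :: t).getLastD a
    rw [List.getD_cons_succ, ih b d, List.getLastD_cons]

lemma flatten_push (a : ℕ) (L : List (List ℕ)) :
    (push a L).flatten = a :: L.flatten := by
  cases L with
  | nil => simp [push]
  | cons r rs =>
    by_cases h : r.headD 0 < a
    · rw [show push a (r :: rs) = (a :: r) :: rs from if_pos h]; simp
    · rw [show push a (r :: rs) = [a] :: r :: rs from if_neg h]; simp

lemma runs_flatten : ∀ l : List ℕ, (runs l).flatten = l := by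
  intro l
  induction l with
  | nil => rfl
  | cons a l ih => simp [runs, flatten_push, ih]

lemma runs_props : ∀ l : List ℕ, ∀ r ∈ runs l, r ≠ [] ∧ r.Chain' (· > ·) := by
  intro l
  induction l with
  | nil => simp [runs]
  | cons a l ih =>
    intro r hr
    simp only [runs] at hr
    cases h : runs l with
    | nil =>
      rw [h] at hr
      simp [push] at hr
      subst hr; exact ⟨by simp, List.isChain_singleton _⟩
    | cons r₀ rs =>
      rw [h] at hr
      obtain ⟨hr₀ne, hr₀dec⟩ := ih r₀ (by rw [h]; exact List.mem_cons_self)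
      by_cases hc : r₀.headD 0 < a
      · simp only [push, if_pos hc] at hr
        rcases List.mem_cons.mp hr with h1 | h2
        · subst h1
          refine ⟨by simp, ?_⟩
          rw [List.Chain', List.isChain_cons]
          refine ⟨?_, hr₀dec⟩
          intro y hy
          cases r₀ with
          | nil => simp at hr₀ne
          | cons b t =>
            simp only [List.head?_cons, Option.mem_some_iff] at hy
            subst hy
            simpa using hc
        · exact ih _ (by rw [h]; exact List.mem_cons_of_mem _ h2)
      · simp only [push, if_neg hc] at hr
        rcases List.mem_cons.mp hr with h1 | h2
        · subst h1; exact ⟨by simp, List.isChain_singleton _⟩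
        · exact ih _ (by rw [h]; exact h2)

lemma runs_lastlt : ∀ l : List ℕ, l.Nodup →
    (runs l).Chain' (fun s t => s.getLastD 0 < t.headD 0) := by
  intro l
  induction l with
  | nil => simp [runs, List.Chain']
  | cons a l ih =>
    intro hnd
    have ha : a ∉ l := (List.nodup_cons.mp hnd).1
    have hnd' : l.Nodup := (List.nodup_cons.mp hnd).2
    have IH := ih hnd'
    simp only [runs]
    cases h : runs l with
    | nil => simp [push, List.Chain']
    | cons r₀ rs =>
      rw [h] at IH
      obtain ⟨hr₀ne, _⟩ := runs_props l r₀ (by rw [h]; exact List.mem_cons_self)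
      have hheadmem : r₀.headD 0 ∈ l := by
        have : r₀.headD 0 ∈ (runs l).flatten :=
          List.mem_flatten.mpr ⟨r₀, by rw [h]; exact List.mem_cons_self,
            headD_mem hr₀ne 0⟩
        rwa [runs_flatten] at this
      by_cases hc : r₀.headD 0 < a
      · simp only [push, if_pos hc]
        rw [List.Chain', List.isChain_cons] at IH ⊢
        refine ⟨?_, IH.2⟩
        intro y hy
        have := IH.1 y hy
        calc (a :: r₀).getLastD 0 = r₀.getLastD a := List.getLastD_cons
          _ = r₀.getLastD 0 := getLastD_irrel hr₀ne a 0
          _ < y.headD 0 := this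
      · simp only [push, if_neg hc]
        rw [List.Chain', List.isChain_cons_cons]
        refine ⟨?_, IH⟩
        have hle : a ≤ r₀.headD 0 := le_of_not_gt hc
        have hne : a ≠ r₀.headD 0 := fun heq => ha (heq ▸ hheadmem)
        simpa using lt_of_le_of_ne hle hne

lemma occ_of_occ_tail {a : ℕ} {l : List ℕ} (h : Occ312 l) : Occ312 (a :: l) := by
  obtain ⟨i, j, hij, hlen, h1, h2⟩ := h
  refine ⟨i + 1, j + 1, by omega, ?_, ?_, ?_⟩
  · simp only [List.length_cons]; omega
  · simpa [List.getD_cons_succ] using h1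
  · simpa [List.getD_cons_succ] using h2

lemma runs_headlt : ∀ l : List ℕ, l.Nodup → ¬ Occ312 l →
    (runs l).Chain' (fun s t => s.headD 0 < t.headD 0) := by
  intro l
  induction l with
  | nil => simp [runs, List.Chain']
  | cons a l ih =>
    intro hnd hocc
    have ha : a ∉ l := (List.nodup_cons.mp hnd).1
    have hnd' := (List.nodup_cons.mp hnd).2
    have hocc' : ¬ Occ312 l := fun h => hocc (occ_of_occ_tail h)
    have IH := ih hnd' hocc'
    simp only [runs]
    cases h : runs l with
    | nil => simp [push, List.Chain']
    | cons r₀ rs =>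
      rw [h] at IH
      obtain ⟨hr₀ne, _⟩ := runs_props l r₀ (by rw [h]; exact List.mem_cons_self)
      have hr₀mem : r₀.headD 0 ∈ l := by
        have : r₀.headD 0 ∈ (runs l).flatten :=
          List.mem_flatten.mpr ⟨r₀, by rw [h]; exact List.mem_cons_self,
            headD_mem hr₀ne 0⟩
        rwa [runs_flatten] at this
      by_cases hc : r₀.headD 0 < a
      · rw [show push a (r₀ :: rs) = (a :: r₀) :: rs from if_pos hc]
        cases rs with
        | nil => simp [List.Chain']
        | cons r₁ rs' =>
          rw [List.Chain', List.isChain_cons_cons]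
          refine ⟨?_, (List.isChain_cons_cons.mp IH).2⟩
          obtain ⟨hr₁ne, _⟩ := runs_props l r₁
            (by rw [h]; exact List.mem_cons_of_mem _ (List.mem_cons_self))
          have hflat : l = r₀ ++ (r₁ ++ rs'.flatten) := by
            have hf := runs_flatten l
            rw [h] at hf
            simpa using hf.symm
          have hmem : r₁.headD 0 ∈ l := by
            rw [hflat]
            exact List.mem_append_right _ (List.mem_append_left _ (headD_mem hr₁ne 0))
          by_contra hcon
          have hlt : r₁.headD 0 < a :=
            lt_of_le_of_ne (le_of_not_gt (by simpa using hcon))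
              (fun heq => ha (heq ▸ hmem))
          have hlast : r₀.getLastD 0 < r₁.headD 0 := by
            have hll := runs_lastlt l hnd'
            rw [h] at hll
            exact (List.isChain_cons_cons.mp hll).1
          have e1 : (a :: l).getD r₀.length 0 = r₀.getLastD 0 := by
            rw [hflat]
            show ((a :: r₀) ++ (r₁ ++ rs'.flatten)).getD r₀.length 0 = _
            rw [List.getD_append _ _ _ _ (by simp), getD_cons_last,
              getLastD_irrel hr₀ne]
          have e2 : (a :: l).getD (r₀.length + 1) 0 = r₁.headD 0 := by
            rw [hflat]
            show ((a :: r₀) ++ (r₁ ++ rs'.flatten)).getD (r₀.length + 1) 0 = _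
            rw [List.getD_append_right _ _ _ _ (by simp)]
            simp only [List.length_cons, Nat.add_sub_cancel, Nat.sub_self]
            rw [List.getD_append _ _ _ _ (List.length_pos_iff.mpr hr₁ne), ← headD_eq_getD]
          exact hocc ⟨0, r₀.length, List.length_pos_iff.mpr hr₀ne,
            by simp only [List.length_cons, hflat, List.length_append]
               have := List.length_pos_iff.mpr hr₁ne; omega,
            by rw [e1, e2]; exact hlast,
            by rw [e2]; exact hlt⟩
      · rw [show push a (r₀ :: rs) = [a] :: r₀ :: rs from if_neg hc]
        rw [List.Chain', List.isChain_cons_cons]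
        refine ⟨?_, IH⟩
        have hle : a ≤ r₀.headD 0 := le_of_not_gt hc
        have hne : a ≠ r₀.headD 0 := fun heq => ha (heq ▸ hr₀mem)
        simpa using lt_of_le_of_ne hle hne

lemma no_occ : ∀ L : List (List ℕ),
    (∀ r ∈ L, r ≠ [] ∧ r.Chain' (· > ·)) →
    L.Chain' (fun s t => s.headD 0 < t.headD 0) →
    (∀ j, j + 1 < L.flatten.length →
        L.flatten.getD j 0 < L.flatten.getD (j + 1) 0 →
        L.flatten.getD 0 0 < L.flatten.getD (j + 1) 0) ∧
    ¬ Occ312 L.flatten := by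
  intro L
  induction L with
  | nil =>
    intro _ _
    constructor
    · intro j hj; simp at hj
    · rintro ⟨i, j, hij, hlen, -, -⟩; simp at hlen
  | cons r L ih =>
    intro hp hhd
    obtain ⟨hrne, hrdec⟩ := hp r (List.mem_cons_self)
    have ih' := ih (fun s hs => hp s (List.mem_cons_of_mem _ hs)) (List.IsChain.tail hhd)
    have hpair : r.Pairwise (· > ·) := List.isChain_iff_pairwise.mp hrdec
    set m := r.length with hm
    have hm0 : 0 < m := List.length_pos_iff.mpr hrne
    have hflat : (r :: L).flatten = r ++ L.flatten := by simp
    have hgetlt : ∀ i, i < m → (r ++ L.flatten).getD i 0 = r.getD i 0 :=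
      fun i hi => List.getD_append _ _ _ _ hi
    have hgetge : ∀ i, m ≤ i → (r ++ L.flatten).getD i 0 = L.flatten.getD (i - m) 0 :=
      fun i hi => List.getD_append_right _ _ _ _ hi
    have hdesc : ∀ j, j + 1 < m → r.getD (j + 1) 0 < r.getD j 0 := by
      intro j hj
      rw [List.getD_eq_getElem _ _ (by omega : j < r.length),
        List.getD_eq_getElem _ _ hj]
      exact List.pairwise_iff_getElem.mp hpair j (j + 1) (by omega) hj (by omega)
    have hmax : ∀ i, i < m → r.getD i 0 ≤ r.getD 0 0 := by
      intro i hi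
      rcases Nat.eq_zero_or_pos i with h0 | h0
      · subst h0; exact le_refl _
      · rw [List.getD_eq_getElem _ _ hi, List.getD_eq_getElem _ _ hm0]
        exact le_of_lt (List.pairwise_iff_getElem.mp hpair 0 i hm0 hi h0)
    have hbd : L.flatten ≠ [] → r.getD 0 0 < L.flatten.getD 0 0 := by
      intro hLne
      cases L with
      | nil => simp at hLne
      | cons r₁ L' =>
        obtain ⟨hr₁ne, -⟩ := hp r₁ (List.mem_cons_of_mem _ (List.mem_cons_self))
        have h01 : r.headD 0 < r₁.headD 0 := (List.isChain_cons_cons.mp hhd).1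
        have he : (r₁ :: L').flatten.getD 0 0 = r₁.getD 0 0 := by
          show (r₁ ++ L'.flatten).getD 0 0 = _
          exact List.getD_append _ _ _ _ (List.length_pos_iff.mpr hr₁ne)
        rw [he, ← headD_eq_getD, ← headD_eq_getD]
        exact h01
    have P : ∀ j, j + 1 < (r :: L).flatten.length →
        (r :: L).flatten.getD j 0 < (r :: L).flatten.getD (j + 1) 0 →
        (r :: L).flatten.getD 0 0 < (r :: L).flatten.getD (j + 1) 0 := by
      rw [hflat]
      intro j hj hasc
      rw [List.length_append] at hj
      have h00 : (r ++ L.flatten).getD 0 0 = r.getD 0 0 := hgetlt 0 hm0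
      by_cases h1 : j + 1 < m
      · exfalso
        rw [hgetlt j (by omega), hgetlt (j + 1) h1] at hasc
        exact absurd hasc (not_lt.mpr (le_of_lt (hdesc j h1)))
      · have hLne : L.flatten ≠ [] := by
          intro he; rw [he] at hj; simp at hj; omega
        by_cases h2 : j < m
        · have hjm : j + 1 = m := by omega
          rw [h00, hgetge (j + 1) (by omega), hjm, Nat.sub_self]
          exact hbd hLne
        · have hjm : m ≤ j := by omega
          rw [hgetge j hjm, hgetge (j + 1) (by omega)] at hasc
          have hsub : j + 1 - m = (j - m) + 1 := by omega
          rw [hsub] at hasc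
          have hPL := ih'.1 (j - m) (by omega) hasc
          rw [h00, hgetge (j + 1) (by omega), hsub]
          exact lt_trans (hbd hLne) hPL
    refine ⟨P, ?_⟩
    rintro ⟨i, j, hij, hlen, h1, h2⟩
    rw [hflat] at hlen h1 h2
    rw [List.length_append] at hlen
    by_cases hj1 : j + 1 < m
    · rw [hgetlt j (by omega), hgetlt (j + 1) hj1] at h1
      exact absurd h1 (not_lt.mpr (le_of_lt (hdesc j hj1)))
    · have hLne : L.flatten ≠ [] := by
        intro he; rw [he] at hlen; simp at hlen; omega
      by_cases hj2 : j < m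
      · have hjm : j + 1 = m := by omega
        have hcon : (r ++ L.flatten).getD i 0 < (r ++ L.flatten).getD (j + 1) 0 := by
          rw [hgetlt i (by omega), hgetge (j + 1) (by omega), hjm, Nat.sub_self]
          exact lt_of_le_of_lt (hmax i (by omega)) (hbd hLne)
        omega
      · have hjm : m ≤ j := by omega
        by_cases him : i < m
        · rw [hgetge j hjm, hgetge (j + 1) (by omega)] at h1
          have hsub : j + 1 - m = (j - m) + 1 := by omega
          rw [hsub] at h1
          have hP := ih'.1 (j - m) (by omega) h1
          have hcon : (r ++ L.flatten).getD i 0 < (r ++ L.flatten).getD (j + 1) 0 := by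
            rw [hgetlt i him, hgetge (j + 1) (by omega), hsub]
            exact lt_trans (lt_of_le_of_lt (hmax i him) (hbd hLne)) hP
          omega
        · apply ih'.2
          have hsub : j + 1 - m = (j - m) + 1 := by omega
          refine ⟨i - m, j - m, by omega, by omega, ?_, ?_⟩
          · rw [hgetge j hjm, hgetge (j + 1) (by omega), hsub] at h1
            exact h1
          · rw [hgetge (j + 1) (by omega), hgetge i (by omega), hsub] at h2
            exact h2

end Avoid312Aux

open Avoid312Aux in

theorem avoid_312_iff (n : ℕ) (π : List ℕ) (hperm : IsPermOf n π) :
    ¬ Occ312 π ↔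
      ∃ (i : ℕ) (D : Fin i → List ℕ),
        π = (List.ofFn D).flatten ∧
        (∀ j, D j ≠ [] ∧ (D j).Chain' (· > ·)) ∧
        (∀ (j : ℕ) (h : j + 1 < i),
          (D ⟨j, by omega⟩).headD 0 < (D ⟨j + 1, h⟩).headD 0) := by
  have hnd : π.Nodup :=
    hperm.nodup_iff.mpr (List.Nodup.map (fun a b h => by omega) List.nodup_range)
  constructor
  · intro hocc
    refine ⟨(runs π).length, (runs π).get, ?_, ?_, ?_⟩
    · rw [List.ofFn_get, runs_flatten]
    · intro j
      exact runs_props π _ (List.get_mem _ j)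
    · intro j hj
      have hch := runs_headlt π hnd hocc
      exact List.isChain_iff_getElem.mp hch j (by omega)
  · rintro ⟨i, D, hpi, hprops, hhds⟩
    subst hpi
    refine (no_occ (List.ofFn D) ?_ ?_).2
    · intro s hs
      rw [List.mem_ofFn] at hs
      obtain ⟨j, rfl⟩ := hs
      exact hprops j
    · rw [List.Chain', List.isChain_iff_getElem]
      intro k hk
      rw [List.getElem_ofFn, List.getElem_ofFn]
      have hk' : k + 1 < i := by
        rw [List.length_ofFn] at hk; omega
      exact hhds k hk'
end

section
/- Permutations of {1,...,n} avoiding the generalized pattern 3-12 are in bijection with set partitions of {1,...,n}; in particular the number of (3-12)-avoiding permutations of length n equals the n-th Bell number. -/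
/-- `t` is the top of an ascent of `l`. -/
def Tops (l : List ℕ) (t : ℕ) : Prop :=
  ∃ j, j + 1 < l.length ∧ l.getD j 0 < l.getD (j + 1) 0 ∧ l.getD (j + 1) 0 = t

lemma tops_cons {x t : ℕ} {l : List ℕ} :
    Tops (x :: l) t ↔ Tops l t ∨ (0 < l.length ∧ x < l.getD 0 0 ∧ l.getD 0 0 = t) := by
  constructor
  · rintro ⟨j, hj, h1, h2⟩
    cases j with
    | zero =>
      right
      simp only [List.getD_cons_succ, List.getD_cons_zero] at h1 h2
      exact ⟨by simpa using hj, h1, h2⟩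
    | succ j =>
      left
      refine ⟨j, by simpa using hj, ?_, ?_⟩
      · simpa only [List.getD_cons_succ] using h1
      · simpa only [List.getD_cons_succ] using h2
  · rintro (⟨j, hj, h1, h2⟩ | ⟨hl, h1, h2⟩)
    · refine ⟨j + 1, by simpa using hj, ?_, ?_⟩
      · simpa only [List.getD_cons_succ] using h1
      · simpa only [List.getD_cons_succ] using h2
    · refine ⟨0, by simpa using hl, ?_, ?_⟩
      · simpa only [List.getD_cons_succ, List.getD_cons_zero] using h1
      · simpa only [List.getD_cons_succ] using h2

lemma occ_cons {x : ℕ} {l : List ℕ} :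
    Occ312 (x :: l) ↔ Occ312 l ∨ ∃ t, Tops l t ∧ t < x := by
  constructor
  · rintro ⟨i, j, hij, hj, h1, h2⟩
    cases i with
    | zero =>
      obtain ⟨j', rfl⟩ : ∃ j', j = j' + 1 := ⟨j - 1, by omega⟩
      right
      refine ⟨l.getD (j' + 1) 0, ⟨j', by simpa using hj, ?_, rfl⟩, ?_⟩
      · simpa only [List.getD_cons_succ] using h1
      · simpa only [List.getD_cons_succ, List.getD_cons_zero] using h2
    | succ i =>
      left
      obtain ⟨j', rfl⟩ : ∃ j', j = j' + 1 := ⟨j - 1, by omega⟩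
      refine ⟨i, j', by omega, by simpa using hj, ?_, ?_⟩
      · simpa only [List.getD_cons_succ] using h1
      · simpa only [List.getD_cons_succ] using h2
  · rintro (⟨i, j, hij, hj, h1, h2⟩ | ⟨t, ⟨j, hj, h1, h2⟩, ht⟩)
    · refine ⟨i + 1, j + 1, by omega, by simpa using hj, ?_, ?_⟩
      · simpa only [List.getD_cons_succ] using h1
      · simpa only [List.getD_cons_succ] using h2
    · refine ⟨0, j + 1, by omega, by simpa using hj, ?_, ?_⟩
      · simpa only [List.getD_cons_succ] using h1
      · simp only [List.getD_cons_succ, List.getD_cons_zero]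
        exact h2 ▸ ht

lemma not_occ_nil : ¬ Occ312 [] := by
  rintro ⟨i, j, hij, hj, -⟩; simp at hj

lemma not_occ_of_cons {x : ℕ} {l : List ℕ} (h : ¬ Occ312 (x :: l)) : ¬ Occ312 l :=
  fun hl => h (occ_cons.mpr (Or.inl hl))

/-- Split a list into maximal (strictly) decreasing runs. -/
def runs : List ℕ → List (List ℕ)
  | [] => []
  | x :: l =>
    match runs l with
    | [] => [[x]]
    | r :: rs => if r.headI < x then (x :: r) :: rs else [x] :: r :: rs

lemma runs_nil : runs [] = [] := rfl

lemma runs_cons_eq_nil {x : ℕ} {l : List ℕ} (h : runs l = []) : runs (x :: l) = [[x]] := by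
  rw [runs, h]

lemma runs_cons_pos {x : ℕ} {l : List ℕ} {r : List ℕ} {rs : List (List ℕ)}
    (h : runs l = r :: rs) (hx : r.headI < x) : runs (x :: l) = (x :: r) :: rs := by
  rw [runs, h]; simp [hx]

lemma runs_cons_neg {x : ℕ} {l : List ℕ} {r : List ℕ} {rs : List (List ℕ)}
    (h : runs l = r :: rs) (hx : ¬ r.headI < x) : runs (x :: l) = [x] :: r :: rs := by
  rw [runs, h]; simp [hx]

lemma flatten_runs (l : List ℕ) : (runs l).flatten = l := by
  induction l with
  | nil => rfl
  | cons x l ih =>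
    rcases h : runs l with _ | ⟨r, rs⟩
    · have hl : l = [] := by rw [h] at ih; simpa using ih.symm
      rw [runs_cons_eq_nil h, hl]; rfl
    · rw [h] at ih
      by_cases hx : r.headI < x
      · rw [runs_cons_pos h hx]; simpa using ih
      · rw [runs_cons_neg h hx]; simpa using ih

lemma runs_ne_nil {l : List ℕ} : ∀ r ∈ runs l, r ≠ [] := by
  induction l with
  | nil => simp [runs_nil]
  | cons x l ih =>
    rcases h : runs l with _ | ⟨r, rs⟩
    · rw [runs_cons_eq_nil h]; simp
    · rw [h] at ih
      by_cases hx : r.headI < x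
      · rw [runs_cons_pos h hx]
        rintro s hs
        rcases List.mem_cons.mp hs with rfl | hs'
        · simp
        · exact ih s (by simp [hs'])
      · rw [runs_cons_neg h hx]
        rintro s hs
        rcases List.mem_cons.mp hs with rfl | hs'
        · simp
        · exact ih s hs'

lemma runs_head {l : List ℕ} (h : l ≠ []) :
    ∃ r rs, runs l = r :: rs ∧ r.headI = l.headI := by
  cases l with
  | nil => simp at h
  | cons x l =>
    rcases hr : runs l with _ | ⟨r, rs⟩
    · exact ⟨[x], [], runs_cons_eq_nil hr, rfl⟩
    · by_cases hx : r.headI < x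
      · exact ⟨x :: r, rs, runs_cons_pos hr hx, rfl⟩
      · exact ⟨[x], r :: rs, runs_cons_neg hr hx, rfl⟩

lemma runs_chain_gt {l : List ℕ} : ∀ r ∈ runs l, r.Chain' (· > ·) := by
  induction l with
  | nil => simp [runs_nil]
  | cons x l ih =>
    rcases h : runs l with _ | ⟨r, rs⟩
    · rw [runs_cons_eq_nil h]; simp; exact List.isChain_singleton _
    · rw [h] at ih
      by_cases hx : r.headI < x
      · rw [runs_cons_pos h hx]
        rintro s hs
        rcases List.mem_cons.mp hs with rfl | hs'
        · have hr := ih r (by simp)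
          rcases r with _ | ⟨y, r'⟩
          · simp; exact List.isChain_singleton _
          · exact List.isChain_cons_cons.mpr ⟨by simpa using hx, hr⟩
        · exact ih s (by simp [hs'])
      · rw [runs_cons_neg h hx]
        rintro s hs
        rcases List.mem_cons.mp hs with rfl | hs'
        · simp; exact List.isChain_singleton _
        · exact ih s hs'

lemma mem_of_mem_runs {l : List ℕ} {r : List ℕ} {v : ℕ} (hr : r ∈ runs l) (hv : v ∈ r) :
    v ∈ l := by
  rw [← flatten_runs l]
  exact List.mem_flatten.mpr ⟨r, hr, hv⟩

lemma headI_mem {α : Type*} [Inhabited α] {l : List α} (h : l ≠ []) : l.headI ∈ l := by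
  cases l with
  | nil => simp at h
  | cons x l => simp

lemma runs_tail_tops {l : List ℕ} (hnd : l.Nodup) :
    ∀ r ∈ (runs l).tail, Tops l r.headI := by
  induction l with
  | nil => simp [runs_nil]
  | cons x l ih =>
    have hnd' : l.Nodup := hnd.of_cons
    rcases h : runs l with _ | ⟨r, rs⟩
    · rw [runs_cons_eq_nil h]; simp
    · by_cases hx : r.headI < x
      · rw [runs_cons_pos h hx]
        intro s hs
        have := ih hnd' s (by rw [h]; exact hs)
        exact tops_cons.mpr (Or.inl this)
      · rw [runs_cons_neg h hx]
        intro s hs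
        rcases List.mem_cons.mp hs with rfl | hs'
        · have hl : l ≠ [] := by rintro rfl; rw [runs_nil] at h; exact List.cons_ne_nil _ _ h.symm
          obtain ⟨r', rs', hr', hh⟩ := runs_head hl
          rw [h] at hr'
          injection hr' with a b
          subst a; subst b
          have hxl : x < l.headI := by
            rw [hh] at hx
            refine lt_of_le_of_ne (not_lt.mp hx) ?_
            intro hEq
            exact (List.nodup_cons.mp hnd).1 (hEq ▸ headI_mem hl)
          refine tops_cons.mpr (Or.inr ⟨?_, ?_, ?_⟩)
          · cases l with
            | nil => simp at hl
            | cons y t => simp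
          · cases l with
            | nil => simp at hl
            | cons y t => simpa using hxl
          · cases l with
            | nil => simp at hl
            | cons y t => rw [hh]; simp
        · exact tops_cons.mpr (Or.inl (ih hnd' s (by rw [h]; exact hs')))

lemma runs_heads_chain {l : List ℕ} (h : ¬ Occ312 l) (hnd : l.Nodup) :
    (runs l).Chain' (fun r r' => r.headI < r'.headI) := by
  induction l with
  | nil => simp [runs_nil]; exact List.isChain_nil
  | cons x l ih =>
    have h' : ¬ Occ312 l := not_occ_of_cons h
    have hnd' : l.Nodup := hnd.of_cons
    have ihc := ih h' hnd'
    have hnotbad : ∀ t, Tops l t → ¬ t < x := by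
      intro t ht hlt
      exact h (occ_cons.mpr (Or.inr ⟨t, ht, hlt⟩))
    rcases hr : runs l with _ | ⟨r, rs⟩ <;> rw [hr] at ihc
    · rw [runs_cons_eq_nil hr]; exact List.isChain_singleton _
    · by_cases hx : r.headI < x
      · rw [runs_cons_pos hr hx]
        rcases rs with _ | ⟨r', rs'⟩
        · exact List.isChain_singleton _
        · refine List.isChain_cons_cons.mpr ⟨?_, ihc.tail⟩
          have htop : Tops l r'.headI := runs_tail_tops hnd' r' (by rw [hr]; simp)
          have hxle : ¬ r'.headI < x := hnotbad _ htop
          have hne : x ≠ r'.headI := by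
            intro hEq
            have hm : r'.headI ∈ l := mem_of_mem_runs (by rw [hr]; simp)
              (headI_mem (runs_ne_nil r' (by rw [hr]; simp)))
            exact (List.nodup_cons.mp hnd).1 (hEq ▸ hm)
          simpa using lt_of_le_of_ne (not_lt.mp hxle) hne
      · rw [runs_cons_neg hr hx]
        refine List.isChain_cons_cons.mpr ⟨?_, ihc⟩
        have hne : x ≠ r.headI := by
          intro hEq
          have hm : r.headI ∈ l := mem_of_mem_runs (by rw [hr]; simp)
            (headI_mem (runs_ne_nil r (by rw [hr]; simp)))
          exact (List.nodup_cons.mp hnd).1 (hEq ▸ hm)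
        simpa using lt_of_le_of_ne (not_lt.mp hx) hne

lemma tops_append {b l : List ℕ} (hb : b.Chain' (· > ·)) {s : ℕ} (h : Tops (b ++ l) s) :
    Tops l s ∨ (0 < l.length ∧ l.getD 0 0 = s) := by
  induction b with
  | nil => exact Or.inl (by simpa using h)
  | cons x b' ih =>
    rcases tops_cons.mp (by simpa using h) with h1 | ⟨hlen, hlt, hEq⟩
    · exact ih hb.tail h1
    · rcases b' with _ | ⟨y, b''⟩
      · exact Or.inr ⟨by simpa using hlen, by simpa using hEq⟩
      · exfalso
        have : x > y := (List.isChain_cons_cons.mp hb).1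
        simp only [List.cons_append, List.getD_cons_zero] at hlt
        omega

lemma noOcc_append {b l : List ℕ} (hb : b.Chain' (· > ·)) (hl : ¬ Occ312 l)
    (htops : ∀ x ∈ b, ∀ s, Tops l s → x < s)
    (hhead : ∀ x ∈ b, 0 < l.length → x < l.getD 0 0) :
    ¬ Occ312 (b ++ l) := by
  induction b with
  | nil => simpa using hl
  | cons x b' ih =>
    intro hocc
    rcases occ_cons.mp (by simpa using hocc) with h1 | ⟨t, ht, htx⟩
    · exact ih hb.tail (fun y hy => htops y (by simp [hy])) (fun y hy => hhead y (by simp [hy])) h1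
    · rcases tops_append hb.tail ht with h2 | ⟨hlen, hEq⟩
      · exact absurd htx (not_lt.mpr (le_of_lt (htops x (by simp) t h2)))
      · exact absurd htx (not_lt.mpr (le_of_lt (hEq ▸ hhead x (by simp) hlen)))

lemma flatten_getD0 {B : List (List ℕ)} (hB : B ≠ []) (hne : ∀ b ∈ B, b ≠ []) :
    0 < B.flatten.length ∧ B.flatten.getD 0 0 = B.headI.headI := by
  rcases B with _ | ⟨b, B'⟩
  · simp at hB
  · rcases b with _ | ⟨y, b'⟩
    · exact absurd rfl (hne [] (by simp))
    · constructor <;> simp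

lemma flatten_avoid {B : List (List ℕ)} (hne : ∀ b ∈ B, b ≠ [])
    (hdec : ∀ b ∈ B, b.Chain' (· > ·))
    (hdom : B.Pairwise (fun b c => ∀ x ∈ b, x < c.headI)) :
    ¬ Occ312 B.flatten ∧ ∀ s, Tops B.flatten s → ∃ c ∈ B.tail, c.headI = s := by
  induction B with
  | nil => exact ⟨not_occ_nil, by intro s hs; rcases hs with ⟨j, hj, -⟩; simp at hj⟩
  | cons b B' ih =>
    obtain ⟨ihA, ihT⟩ := ih (fun c hc => hne c (by simp [hc])) (fun c hc => hdec c (by simp [hc]))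
      (List.pairwise_cons.mp hdom).2
    have hdomb : ∀ c ∈ B', ∀ x ∈ b, x < c.headI := by
      intro c hc x hx
      exact (List.pairwise_cons.mp hdom).1 c hc x hx
    have hbchain := hdec b (by simp)
    have step1 : ∀ x ∈ b, ∀ s, Tops B'.flatten s → x < s := by
      intro x hx s hs
      obtain ⟨c, hc, hcs⟩ := ihT s hs
      exact hcs ▸ hdomb c (List.mem_of_mem_tail hc) x hx
    have step2 : ∀ x ∈ b, 0 < B'.flatten.length → x < B'.flatten.getD 0 0 := by
      intro x hx hlen
      have hB' : B' ≠ [] := by rintro rfl; simp at hlen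
      obtain ⟨-, hEq⟩ := flatten_getD0 hB' (fun c hc => hne c (by simp [hc]))
      rw [hEq]
      have : B'.headI ∈ B' := headI_mem hB'
      exact hdomb _ this x hx
    constructor
    · simpa using noOcc_append hbchain ihA step1 step2
    · intro s hs
      rcases tops_append hbchain (by simpa using hs) with h1 | ⟨hlen, hEq⟩
      · obtain ⟨c, hc, hcs⟩ := ihT s h1
        exact ⟨c, by simpa using List.mem_of_mem_tail hc, hcs⟩
      · have hB' : B' ≠ [] := by rintro rfl; simp at hlen
        obtain ⟨-, hEq'⟩ := flatten_getD0 hB' (fun c hc => hne c (by simp [hc]))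
        exact ⟨B'.headI, by simpa using headI_mem hB', by rw [← hEq, hEq']⟩

lemma runs_append {b l : List ℕ} (hb : b ≠ []) (hchain : b.Chain' (· > ·))
    (hlast : l ≠ [] → b.getLast hb < l.headI) :
    runs (b ++ l) = b :: runs l := by
  induction b with
  | nil => simp at hb
  | cons x b' ih =>
    rcases b' with _ | ⟨y, b''⟩
    · simp only [List.nil_append, List.singleton_append]
      rcases hl : l with _ | ⟨z, t⟩
      · rw [runs_cons_eq_nil runs_nil, runs_nil]
      · obtain ⟨r, rs, hr, hh⟩ := runs_head (l := z :: t) (by simp)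
        have hxz : ¬ r.headI < x := by
          rw [hh]
          have := hlast (by simp [hl])
          rw [hl] at this
          simp only [List.getLast_singleton] at this
          simpa using not_lt.mpr (le_of_lt this)
        rw [runs_cons_neg hr hxz, hr]
    · have hb' : (y :: b'') ≠ [] := by simp
      have ihr : runs (y :: b'' ++ l) = (y :: b'') :: runs l := by
        apply ih hb' hchain.tail
        intro hl
        have := hlast hl
        rwa [List.getLast_cons hb'] at this
      have hhead : ((y :: b'') ++ l).headI = y := by simp
      have : runs ((x :: y :: b'') ++ l) = runs (x :: ((y :: b'') ++ l)) := by simp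
      rw [this, runs_cons_pos ihr ?hx]
      case hx =>
        simpa using (List.isChain_cons_cons.mp hchain).1

lemma runs_flatten {B : List (List ℕ)} (hne : ∀ b ∈ B, b ≠ [])
    (hdec : ∀ b ∈ B, b.Chain' (· > ·))
    (hadj : B.Chain' (fun b c => ∀ (h : b ≠ []), b.getLast h < c.headI)) :
    runs B.flatten = B := by
  induction B with
  | nil => simp [runs_nil]
  | cons b B' ih =>
    have hbne := hne b (by simp)
    have hflat : (b :: B').flatten = b ++ B'.flatten := by simp
    rw [hflat, runs_append hbne (hdec b (by simp)) ?hl,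
      ih (fun c hc => hne c (by simp [hc])) (fun c hc => hdec c (by simp [hc])) hadj.tail]
    case hl =>
      intro hfl
      have hB' : B' ≠ [] := by rintro rfl; simp at hfl
      obtain ⟨-, hEq⟩ := flatten_getD0 hB' (fun c hc => hne c (by simp [hc]))
      have hrel : ∀ (h : b ≠ []), b.getLast h < B'.headI.headI := by
        rcases B' with _ | ⟨c, B''⟩
        · simp at hB'
        · exact fun h => (List.isChain_cons_cons.mp hadj).1 h
      have : B'.flatten.headI = B'.flatten.getD 0 0 := by
        rcases hfl' : B'.flatten with _ | ⟨z, t⟩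
        · exact absurd hfl' hfl
        · simp
      rw [this, hEq]
      exact hrel hbne

section PartitionSide

variable {n : ℕ}

instance : IsAntisymm ℕ (· > ·) := ⟨fun a b h1 h2 => absurd (lt_trans h1 h2) (lt_irrefl _)⟩

/-- Value-level key of a block: one plus its maximum. -/
def pkey (s : Finset (Fin n)) : ℕ := s.sup (fun k => (k : ℕ) + 1)

/-- The block `s` written as a decreasing list of values in `{1,…,n}`. -/
def descList (s : Finset (Fin n)) : List ℕ :=
  ((s.sort (· ≤ ·)).reverse).map (fun k : Fin n => (k : ℕ) + 1)

/-- Recover a block from a value list. -/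
def recover (n : ℕ) (r : List ℕ) : Finset (Fin n) :=
  Finset.univ.filter (fun k => (k : ℕ) + 1 ∈ r)

lemma mem_descList {s : Finset (Fin n)} {v : ℕ} :
    v ∈ descList s ↔ ∃ k ∈ s, (k : ℕ) + 1 = v := by
  unfold descList
  constructor
  · intro h
    obtain ⟨k, hk, rfl⟩ := List.mem_map.mp h
    exact ⟨k, (Finset.mem_sort _).mp (List.mem_reverse.mp hk), rfl⟩
  · rintro ⟨k, hk, rfl⟩
    exact List.mem_map.mpr ⟨k, List.mem_reverse.mpr ((Finset.mem_sort _).mpr hk), rfl⟩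

lemma descList_chain (s : Finset (Fin n)) : (descList s).Chain' (· > ·) := by
  apply List.Pairwise.isChain
  rw [descList]
  have h1 : List.Pairwise (· < ·) (s.sort (· ≤ ·)) := (Finset.sortedLT_sort s).pairwise
  have h2 : List.Pairwise (fun a b : Fin n => b < a) ((s.sort (· ≤ ·)).reverse) :=
    List.pairwise_reverse.mpr h1
  refine h2.map _ ?_
  intro a b h
  have : (b : ℕ) < (a : ℕ) := h
  simp only [gt_iff_lt]
  omega

lemma le_key_of_mem_descList {s : Finset (Fin n)} {v : ℕ} (h : v ∈ descList s) : v ≤ pkey s := by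
  obtain ⟨k, hk, rfl⟩ := mem_descList.mp h
  exact Finset.le_sup (f := fun k : Fin n => (k : ℕ) + 1) hk

lemma key_mem_descList {s : Finset (Fin n)} (h : s.Nonempty) : pkey s ∈ descList s := by
  obtain ⟨k, hk, hs⟩ := Finset.exists_mem_eq_sup s h (fun k => (k : ℕ) + 1)
  exact mem_descList.mpr ⟨k, hk, hs.symm⟩

lemma headI_of_chain_gt {l : List ℕ} (hc : l.Chain' (· > ·)) {x : ℕ} (hx : x ∈ l) :
    x ≤ l.headI := by
  rcases l with _ | ⟨y, t⟩
  · simp at hx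
  · rcases List.mem_cons.mp hx with rfl | hx'
    · simp
    · have := (List.isChain_cons.mp hc).2
      have hp : List.Pairwise (· > ·) (y :: t) := by
        rw [← List.isChain_iff_pairwise]; exact hc
      exact le_of_lt ((List.pairwise_cons.mp hp).1 x hx')

lemma descList_ne_nil {s : Finset (Fin n)} (h : s.Nonempty) : descList s ≠ [] := by
  intro hEq
  exact (by simpa [hEq] using key_mem_descList h : False)

lemma descList_headI {s : Finset (Fin n)} (h : s.Nonempty) : (descList s).headI = pkey s := by
  refine le_antisymm ?_ ?_
  · exact le_key_of_mem_descList (headI_mem (descList_ne_nil h))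
  · exact headI_of_chain_gt (descList_chain s) (key_mem_descList h)

lemma recover_descList (s : Finset (Fin n)) : recover n (descList s) = s := by
  ext k
  simp only [recover, Finset.mem_filter, Finset.mem_univ, true_and, mem_descList]
  constructor
  · rintro ⟨k', hk', hEq⟩
    have : k' = k := Fin.ext (by omega)
    exact this ▸ hk'
  · intro hk
    exact ⟨k, hk, rfl⟩

lemma nodup_descList (s : Finset (Fin n)) : (descList s).Nodup :=
  (List.isChain_iff_pairwise.mp (descList_chain s)).imp (fun h => Nat.ne_of_gt h)

lemma descList_recover {r : List ℕ} (hc : r.Chain' (· > ·))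
    (hb : ∀ v ∈ r, 1 ≤ v ∧ v ≤ n) : descList (recover n r) = r := by
  have hnd : r.Nodup := by
    have hp : List.Pairwise (· > ·) r := List.isChain_iff_pairwise.mp hc
    exact hp.imp (fun h => Nat.ne_of_gt h)
  have hnd' : (descList (recover n r)).Nodup := by
    have hp : List.Pairwise (· > ·) (descList (recover n r)) :=
      List.isChain_iff_pairwise.mp (descList_chain _)
    exact hp.imp (fun h => Nat.ne_of_gt h)
  refine List.Perm.eq_of_pairwise'
    (List.isChain_iff_pairwise.mp (descList_chain _))
    (List.isChain_iff_pairwise.mp hc)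
    (List.perm_of_nodup_nodup_toFinset_eq hnd' hnd ?_)
  ext v
  simp only [List.mem_toFinset, mem_descList, recover, Finset.mem_filter, Finset.mem_univ,
    true_and]
  constructor
  · rintro ⟨k, hk, rfl⟩
    exact hk
  · intro hv
    obtain ⟨h1, h2⟩ := hb v hv
    exact ⟨⟨v - 1, by omega⟩, by simpa using (by omega : v - 1 + 1 = v) ▸ hv, by simp; omega⟩

lemma recover_nonempty {r : List ℕ} (hr : r ≠ []) (hb : ∀ v ∈ r, 1 ≤ v ∧ v ≤ n) :
    (recover n r).Nonempty := by
  have hm : r.headI ∈ r := headI_mem hr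
  obtain ⟨h1, h2⟩ := hb _ hm
  refine ⟨⟨r.headI - 1, by omega⟩, ?_⟩
  simp only [recover, Finset.mem_filter, Finset.mem_univ, true_and]
  simpa using (by omega : r.headI - 1 + 1 = r.headI) ▸ hm

lemma key_recover {r : List ℕ} (hr : r ≠ []) (hc : r.Chain' (· > ·))
    (hb : ∀ v ∈ r, 1 ≤ v ∧ v ≤ n) : pkey (recover n r) = r.headI := by
  rw [← descList_headI (recover_nonempty hr hb), descList_recover hc hb]

end PartitionSide

section Maps

variable {n : ℕ}

noncomputable def sortedParts (P : Finpartition (Finset.univ : Finset (Fin n))) : List (Finset (Fin n)) :=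
  P.parts.toList.mergeSort (fun s t => decide (pkey s ≤ pkey t))

noncomputable def Phi (P : Finpartition (Finset.univ : Finset (Fin n))) : List ℕ :=
  ((sortedParts P).map descList).flatten

lemma sortedParts_perm (P : Finpartition (Finset.univ : Finset (Fin n))) :
    (sortedParts P).Perm P.parts.toList := List.mergeSort_perm _ _

lemma mem_sortedParts {P : Finpartition (Finset.univ : Finset (Fin n))} {s : Finset (Fin n)} :
    s ∈ sortedParts P ↔ s ∈ P.parts := by
  rw [(sortedParts_perm P).mem_iff, Finset.mem_toList]

lemma nodup_sortedParts (P : Finpartition (Finset.univ : Finset (Fin n))) :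
    (sortedParts P).Nodup := (sortedParts_perm P).nodup_iff.mpr (Finset.nodup_toList _)

lemma pkey_inj {P : Finpartition (Finset.univ : Finset (Fin n))} {s t : Finset (Fin n)}
    (hs : s ∈ P.parts) (ht : t ∈ P.parts) (h : pkey s = pkey t) : s = t := by
  by_contra hne
  obtain ⟨k, hk, hks⟩ := Finset.exists_mem_eq_sup s (P.nonempty_of_mem_parts hs)
    (fun k : Fin n => (k : ℕ) + 1)
  obtain ⟨k', hk', hkt⟩ := Finset.exists_mem_eq_sup t (P.nonempty_of_mem_parts ht)
    (fun k : Fin n => (k : ℕ) + 1)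
  have hkk : k = k' := Fin.ext (by
    have : (k : ℕ) + 1 = (k' : ℕ) + 1 := by rw [← hks, ← hkt]; exact h
    omega)
  have hdisj : Disjoint s t := P.disjoint hs ht hne
  exact (Finset.disjoint_left.mp hdisj hk) (hkk ▸ hk')

lemma sortedParts_sorted (P : Finpartition (Finset.univ : Finset (Fin n))) :
    (sortedParts P).Pairwise (fun s t => pkey s < pkey t) := by
  have h1 : (sortedParts P).Pairwise (fun s t => pkey s ≤ pkey t) := by
    have := List.pairwise_mergeSort (le := fun s t : Finset (Fin n) => decide (pkey s ≤ pkey t))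
      (by intro a b c hab hbc; simp only [decide_eq_true_eq] at *; omega)
      (by intro a b; simp only [Bool.or_eq_true, decide_eq_true_eq]; omega)
      P.parts.toList
    exact this.imp (fun h => by simpa using h)
  have h2 : (sortedParts P).Pairwise (fun s t : Finset (Fin n) => s ≠ t) := nodup_sortedParts P
  refine ((h1.and h2).imp_of_mem ?_)
  intro s t hs ht ⟨hle, hne⟩
  exact lt_of_le_of_ne hle (fun h => hne (pkey_inj (mem_sortedParts.mp hs) (mem_sortedParts.mp ht) h))

lemma blocks_ne_nil {P : Finpartition (Finset.univ : Finset (Fin n))} :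
    ∀ b ∈ (sortedParts P).map descList, b ≠ [] := by
  intro b hb
  obtain ⟨s, hs, rfl⟩ := List.mem_map.mp hb
  exact descList_ne_nil (P.nonempty_of_mem_parts (mem_sortedParts.mp hs))

lemma blocks_chain {P : Finpartition (Finset.univ : Finset (Fin n))} :
    ∀ b ∈ (sortedParts P).map descList, b.Chain' (· > ·) := by
  intro b hb
  obtain ⟨s, hs, rfl⟩ := List.mem_map.mp hb
  exact descList_chain s

lemma blocks_dom {P : Finpartition (Finset.univ : Finset (Fin n))} :
    ((sortedParts P).map descList).Pairwise (fun b c => ∀ x ∈ b, x < c.headI) := by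
  refine List.pairwise_map.mpr ?_
  refine (sortedParts_sorted P).imp_of_mem ?_
  intro s t hs ht hkey x hx
  rw [descList_headI (P.nonempty_of_mem_parts (mem_sortedParts.mp ht))]
  exact lt_of_le_of_lt (le_key_of_mem_descList hx) hkey

lemma Phi_avoid (P : Finpartition (Finset.univ : Finset (Fin n))) : ¬ Occ312 (Phi P) :=
  (flatten_avoid blocks_ne_nil blocks_chain blocks_dom).1

lemma mem_Phi {P : Finpartition (Finset.univ : Finset (Fin n))} {v : ℕ} :
    v ∈ Phi P ↔ ∃ k : Fin n, (k : ℕ) + 1 = v := by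
  rw [Phi, List.mem_flatten]
  constructor
  · rintro ⟨b, hb, hv⟩
    obtain ⟨s, hs, rfl⟩ := List.mem_map.mp hb
    obtain ⟨k, -, rfl⟩ := mem_descList.mp hv
    exact ⟨k, rfl⟩
  · rintro ⟨k, rfl⟩
    obtain ⟨t, ht, hkt⟩ := P.exists_mem (Finset.mem_univ k)
    exact ⟨descList t, List.mem_map.mpr ⟨t, mem_sortedParts.mpr ht, rfl⟩,
      mem_descList.mpr ⟨k, hkt, rfl⟩⟩

lemma nodup_Phi (P : Finpartition (Finset.univ : Finset (Fin n))) : (Phi P).Nodup := by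
  rw [Phi, List.nodup_flatten]
  constructor
  · intro b hb
    obtain ⟨s, hs, rfl⟩ := List.mem_map.mp hb
    exact nodup_descList s
  · refine List.pairwise_map.mpr ?_
    refine (nodup_sortedParts P).imp_of_mem ?_
    intro s t hs ht hne v hvs hvt
    obtain ⟨k, hk, rfl⟩ := mem_descList.mp hvs
    obtain ⟨k', hk', hEq⟩ := mem_descList.mp hvt
    have : k' = k := Fin.ext (by omega)
    subst this
    have hdisj : Disjoint s t :=
      P.disjoint (mem_sortedParts.mp hs) (mem_sortedParts.mp ht) hne
    exact Finset.disjoint_left.mp hdisj hk hk'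

lemma Phi_isPermOf (P : Finpartition (Finset.univ : Finset (Fin n))) : IsPermOf n (Phi P) := by
  refine List.perm_of_nodup_nodup_toFinset_eq (nodup_Phi P) ?_ ?_
  · exact (List.nodup_range (n := n)).map (fun a b => by omega)
  · ext v
    simp only [List.mem_toFinset, mem_Phi, List.mem_map, List.mem_range]
    constructor
    · rintro ⟨k, rfl⟩
      exact ⟨(k : ℕ), k.isLt, rfl⟩
    · rintro ⟨m, hm, rfl⟩
      exact ⟨⟨m, hm⟩, rfl⟩

end Maps

section Psi

variable {n : ℕ}

lemma isPermOf_mem {l : List ℕ} (h : IsPermOf n l) {v : ℕ} : v ∈ l ↔ 1 ≤ v ∧ v ≤ n := by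
  rw [h.mem_iff]
  simp only [List.mem_map, List.mem_range]
  constructor
  · rintro ⟨m, hm, rfl⟩; omega
  · rintro ⟨h1, h2⟩; exact ⟨v - 1, by omega, by omega⟩

lemma isPermOf_nodup {l : List ℕ} (h : IsPermOf n l) : l.Nodup :=
  h.nodup_iff.mpr ((List.nodup_range (n := n)).map (fun a b => by omega))

lemma runs_disjoint {l : List ℕ} (hnd : l.Nodup) : (runs l).Pairwise List.Disjoint :=
  (List.nodup_flatten.mp (by rw [flatten_runs]; exact hnd)).2

lemma runs_bounds {l : List ℕ} (h : IsPermOf n l) {r : List ℕ} (hr : r ∈ runs l) :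
    ∀ v ∈ r, 1 ≤ v ∧ v ≤ n :=
  fun v hv => (isPermOf_mem h).mp (mem_of_mem_runs hr hv)

noncomputable def Psi (l : List ℕ) (h : IsPermOf n l) :
    Finpartition (Finset.univ : Finset (Fin n)) where
  parts := ((runs l).map (recover n)).toFinset
  supIndep := by
    rw [Finset.supIndep_iff_pairwiseDisjoint]
    intro s hs t ht hne
    simp only [Finset.coe_mem, Finset.mem_coe, List.mem_toFinset, List.mem_map] at hs ht
    obtain ⟨r, hr, rfl⟩ := hs
    obtain ⟨r', hr', rfl⟩ := ht
    have hrr : r ≠ r' := fun hEq => hne (by rw [hEq])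
    have hdisj : List.Disjoint r r' := by
      haveI : Std.Symm (@List.Disjoint ℕ) := ⟨fun _ _ hd => hd.symm⟩
      exact (runs_disjoint (isPermOf_nodup h)).forall hr hr' hrr
    simp only [Function.onFun, id]
    rw [Finset.disjoint_left]
    intro k hk hk'
    simp only [recover, Finset.mem_filter, Finset.mem_univ, true_and] at hk hk'
    exact hdisj hk hk'
  sup_parts := by
    refine Finset.Subset.antisymm (Finset.sup_le (fun s _ => Finset.subset_univ s)) ?_
    intro k _
    rw [Finset.mem_sup]
    have hkl : (k : ℕ) + 1 ∈ l := (isPermOf_mem h).mpr ⟨by omega, by omega⟩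
    rw [← flatten_runs l, List.mem_flatten] at hkl
    obtain ⟨r, hr, hkr⟩ := hkl
    refine ⟨recover n r, List.mem_toFinset.mpr (List.mem_map.mpr ⟨r, hr, rfl⟩), ?_⟩
    show k ∈ recover n r
    simp only [recover, Finset.mem_filter, Finset.mem_univ, true_and]
    exact hkr
  bot_notMem := by
    intro hmem
    simp only [Finset.bot_eq_empty, List.mem_toFinset, List.mem_map] at hmem
    obtain ⟨r, hr, hEq⟩ := hmem
    have hne : (recover n r).Nonempty :=
      recover_nonempty (runs_ne_nil r hr) (runs_bounds h hr)
    rw [hEq] at hne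
    exact Finset.not_nonempty_empty hne

lemma Psi_parts {l : List ℕ} (h : IsPermOf n l) :
    (Psi l h).parts = ((runs l).map (recover n)).toFinset := rfl

lemma Psi_Phi (P : Finpartition (Finset.univ : Finset (Fin n))) :
    Psi (Phi P) (Phi_isPermOf P) = P := by
  apply Finpartition.ext
  rw [Psi_parts]
  have hruns : runs (Phi P) = (sortedParts P).map descList := by
    apply runs_flatten blocks_ne_nil blocks_chain
    exact (blocks_dom.imp (fun {b c} hx (hb : b ≠ []) => hx _ (List.getLast_mem hb))).isChain
  rw [hruns, List.map_map]
  have hcomp : (sortedParts P).map (recover n ∘ descList) = sortedParts P := by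
    have h1 : (sortedParts P).map (recover n ∘ descList) = (sortedParts P).map id :=
      List.map_congr_left (fun s _ => recover_descList s)
    rw [h1, List.map_id]
  rw [hcomp, List.toFinset_eq_of_perm _ _ (sortedParts_perm P), Finset.toList_toFinset]

lemma nodup_runs_map_recover {l : List ℕ} (h : IsPermOf n l) :
    ((runs l).map (recover n)).Nodup := by
  refine List.pairwise_map.mpr ?_
  refine (runs_disjoint (isPermOf_nodup h)).imp_of_mem ?_
  intro r r' hr hr' hdisj hEq
  have hrne := runs_ne_nil r hr
  obtain ⟨h1, h2⟩ := runs_bounds h hr _ (headI_mem hrne)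
  have hk : (⟨r.headI - 1, by omega⟩ : Fin n) ∈ recover n r := by
    simp only [recover, Finset.mem_filter, Finset.mem_univ, true_and]
    simpa using (by omega : r.headI - 1 + 1 = r.headI) ▸ headI_mem hrne
  rw [hEq] at hk
  simp only [recover, Finset.mem_filter, Finset.mem_univ, true_and] at hk
  have : r.headI ∈ r' := by simpa using (by omega : r.headI - 1 + 1 = r.headI) ▸ hk
  exact hdisj (headI_mem hrne) this

lemma Phi_Psi {l : List ℕ} (hp : IsPermOf n l) (ha : ¬ Occ312 l) :
    Phi (Psi l hp) = l := by
  have hnd := isPermOf_nodup hp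
  have hperm : (Psi l hp).parts.toList.Perm ((runs l).map (recover n)) := by
    rw [Psi_parts]
    exact List.toFinset_toList (nodup_runs_map_recover hp)
  have hsorted_right : ((runs l).map (recover n)).Pairwise (fun s t => pkey s < pkey t) := by
    refine List.pairwise_map.mpr ?_
    have hchain := runs_heads_chain ha hnd
    haveI : IsTrans (List ℕ) (fun r r' : List ℕ => r.headI < r'.headI) :=
      ⟨fun _ _ _ => lt_trans⟩
    have hpw : (runs l).Pairwise (fun r r' => r.headI < r'.headI) :=
      List.isChain_iff_pairwise.mp hchain
    refine hpw.imp_of_mem ?_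
    intro r r' hr hr' hlt
    rw [key_recover (runs_ne_nil r hr) (runs_chain_gt r hr) (runs_bounds hp hr),
      key_recover (runs_ne_nil r' hr') (runs_chain_gt r' hr') (runs_bounds hp hr')]
    exact hlt
  have hstep : sortedParts (Psi l hp) = (runs l).map (recover n) := by
    haveI : IsAntisymm (Finset (Fin n)) (fun s t => pkey s < pkey t) :=
      ⟨fun a b h1 h2 => absurd (lt_trans h1 h2) (lt_irrefl _)⟩
    refine List.Perm.eq_of_pairwise' (r := fun s t => pkey s < pkey t)
      (sortedParts_sorted _) hsorted_right ((sortedParts_perm _).trans hperm)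
  rw [Phi, hstep, List.map_map]
  have hcomp : (runs l).map (descList ∘ recover n) = runs l := by
    have h1 : (runs l).map (descList ∘ recover n) = (runs l).map id :=
      List.map_congr_left
        (fun r hr => descList_recover (runs_chain_gt r hr) (runs_bounds hp hr))
    rw [h1, List.map_id]
  rw [hcomp, flatten_runs]

end Psi

/-- `(3-12)`-avoiding permutations of `{1,…,n}` are in bijection with set partitions
of `{1,…,n}`; in particular they are counted by the `n`-th Bell number, i.e. by the
number of set partitions of an `n`-element set. -/
theorem avoid_312_bij_partitions (n : ℕ) :
    Nonempty ({l : List ℕ // IsPermOf n l ∧ ¬ Occ312 l} ≃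
      Finpartition (Finset.univ : Finset (Fin n))) ∧
    Nat.card {l : List ℕ // IsPermOf n l ∧ ¬ Occ312 l} =
      Nat.card (Finpartition (Finset.univ : Finset (Fin n))) := by
  have e : {l : List ℕ // IsPermOf n l ∧ ¬ Occ312 l} ≃
      Finpartition (Finset.univ : Finset (Fin n)) :=
    { toFun := fun x => Psi x.1 x.2.1
      invFun := fun P => ⟨Phi P, Phi_isPermOf P, Phi_avoid P⟩
      left_inv := fun x => Subtype.ext (Phi_Psi x.2.1 x.2.2)
      right_inv := fun P => Psi_Phi P }
  exact ⟨⟨e⟩, Nat.card_congr e⟩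
end

section
/- If π = M_1 π_1 M_2 π_2 ... M_i π_i with M_1,...,M_i the left-to-right maxima of π, then ψ(π) = π_i M_i ... π_2 M_2 π_1 M_1. -/
/-- `ψ` satisfies the defining recursion `ψ(∅) = ∅` and
`ψ(π_ℓ n π_r) = π_r n ψ(π_ℓ)`, where `n` is the largest entry. -/
def PsiSpec (ψ : List ℕ → List ℕ) : Prop :=
  ψ [] = [] ∧
  ∀ (l r : List ℕ) (n : ℕ), (∀ x ∈ l ++ r, x < n) → ψ (l ++ n :: r) = r ++ n :: ψ l

theorem psi_aux (ψ : List ℕ → List ℕ) (hψ : PsiSpec ψ) (i : ℕ) :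
    ∀ (M : Fin i → ℕ) (B : Fin i → List ℕ), StrictMono M →
    (∀ j' j : Fin i, j' ≤ j → ∀ x ∈ B j', x < M j) →
    ψ (List.ofFn fun j => M j :: B j).flatten =
      (List.ofFn fun j : Fin i => B j.rev ++ [M j.rev]).flatten := by
  induction i with
  | zero => intro M B _ _; simpa using hψ.1
  | succ n ih =>
    intro M B hM hB
    have hsplit : (List.ofFn fun j => M j :: B j).flatten =
        (List.ofFn fun j : Fin n => M j.castSucc :: B j.castSucc).flatten ++
          M (Fin.last n) :: B (Fin.last n) := by
      rw [List.ofFn_succ']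
      simp
    rw [hsplit, hψ.2 _ _ _ ?_]
    · rw [ih (fun j => M j.castSucc) (fun j => B j.castSucc)
        (fun a b hab => hM (by simpa using hab))
        (fun j' j h x hx => hB j'.castSucc j.castSucc (by simpa using h) x hx)]
      rw [List.ofFn_succ]
      simp only [List.flatten_cons, Fin.rev_zero, Fin.rev_succ]
      simp
    · intro x hx
      rcases List.mem_append.1 hx with hx | hx
      · rcases List.mem_flatten.1 hx with ⟨l, hl, hxl⟩
        rcases List.mem_ofFn.1 hl with ⟨j, rfl⟩
        rcases List.mem_cons.1 hxl with rfl | hxB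
        · exact hM (Fin.castSucc_lt_last j)
        · exact hB j.castSucc (Fin.last n) (Fin.le_last _) x hxB
      · exact hB (Fin.last n) (Fin.last n) le_rfl x hx

/-- If `π = M₁π₁M₂π₂⋯Mᵢπᵢ` with the `Mⱼ` the left-to-right maxima of `π`,
then `ψ(π) = πᵢMᵢ⋯π₂M₂π₁M₁`. -/
theorem psi_of_lr_max_decomposition (ψ : List ℕ → List ℕ) (hψ : PsiSpec ψ)
    (N i : ℕ) (M : Fin i → ℕ) (B : Fin i → List ℕ) (π : List ℕ)
    (hπ : π = (List.ofFn fun j => M j :: B j).flatten)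
    (hperm : IsPermOf N π)
    (hM : StrictMono M)
    (hB : ∀ j' j : Fin i, j' ≤ j → ∀ x ∈ B j', x < M j) :
    ψ π = (List.ofFn fun j : Fin i => B j.rev ++ [M j.rev]).flatten := by
  subst hπ
  exact psi_aux ψ hψ i M B hM hB
end

section
/- For every permutation π, the set of left-to-right maxima of π equals the set of right-to-left maxima of ψ(π). -/
/-- The set of values of left-to-right maxima of `l`. -/
def LMAX (l : List ℕ) : Set ℕ :=
  {x | ∃ i < l.length, l.getD i 0 = x ∧ ∀ j < i, l.getD j 0 < x}

/-- The set of values of right-to-left maxima of `l`. -/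
def RMAX (l : List ℕ) : Set ℕ :=
  {x | ∃ i < l.length, l.getD i 0 = x ∧ ∀ j, i < j → j < l.length → l.getD j 0 < x}

lemma getD_mem' {l : List ℕ} {i : ℕ} (h : i < l.length) : l.getD i 0 ∈ l := by
  rw [List.getD_eq_getElem _ _ h]; exact List.getElem_mem h

/-- A nonempty list of distinct naturals splits at its strict maximum. -/
lemma max_split {l : List ℕ} (hne : l ≠ []) (hnd : l.Nodup) :
    ∃ a m b, l = a ++ m :: b ∧ (∀ x ∈ a ++ b, x < m) := by
  obtain ⟨m, hm⟩ : ∃ m, l.max? = some m := by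
    cases h : l.max? with
    | none => exact absurd (List.max?_eq_none_iff.mp h) hne
    | some m => exact ⟨m, rfl⟩
  obtain ⟨hmem, hle⟩ : m ∈ l ∧ ∀ x ∈ l, x ≤ m :=
    List.max?_eq_some_iff.mp hm
  obtain ⟨a, b, rfl⟩ := List.append_of_mem hmem
  refine ⟨a, m, b, rfl, ?_⟩
  intro x hx
  have hxl : x ∈ a ++ m :: b := by
    rcases List.mem_append.mp hx with h | h
    · exact List.mem_append.mpr (Or.inl h)
    · exact List.mem_append.mpr (Or.inr (List.mem_cons_of_mem _ h))
  have hxm : x ≤ m := hle x hxl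
  have hne' : x ≠ m := by
    rintro rfl
    rw [List.nodup_append] at hnd
    rcases List.mem_append.mp hx with h | h
    · exact hnd.2.2 _ h _ List.mem_cons_self rfl
    · exact (List.nodup_cons.mp hnd.2.1).1 h
  exact lt_of_le_of_ne hxm hne'

lemma lmax_split {a b : List ℕ} {m : ℕ} (h : ∀ x ∈ a ++ b, x < m) :
    LMAX (a ++ m :: b) = insert m (LMAX a) := by
  have ha : ∀ x ∈ a, x < m := fun x hx => h x (List.mem_append.mpr (Or.inl hx))
  have hb : ∀ x ∈ b, x < m := fun x hx => h x (List.mem_append.mpr (Or.inr hx))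
  ext x
  simp only [LMAX, Set.mem_setOf_eq, Set.mem_insert_iff]
  constructor
  · rintro ⟨i, hi, hx, hlt⟩
    rcases lt_trichotomy i a.length with h1 | h1 | h1
    · right
      refine ⟨i, h1, by rw [← hx, List.getD_append _ _ _ _ h1], ?_⟩
      intro j hj
      have := hlt j hj
      rwa [List.getD_append _ _ _ _ (hj.trans h1)] at this
    · left
      rw [← hx, List.getD_append_right _ _ _ _ (le_of_eq h1.symm), h1,
        Nat.sub_self, List.getD_cons_zero]
    · exfalso
      have hxb : x ∈ b := by
        rw [← hx, List.getD_append_right _ _ _ _ (le_of_lt h1)]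
        obtain ⟨k, hk⟩ : ∃ k, i - a.length = k + 1 := ⟨i - a.length - 1, by omega⟩
        rw [hk, List.getD_cons_succ]
        refine getD_mem' ?_
        simp only [List.length_append, List.length_cons] at hi
        omega
      have hma : (a ++ m :: b).getD a.length 0 = m := by
        rw [List.getD_append_right _ _ _ _ (le_refl _), Nat.sub_self,
          List.getD_cons_zero]
      have := hlt a.length h1
      rw [hma] at this
      exact absurd (hb x hxb) (not_lt.mpr (le_of_lt this))
  · rintro (rfl | ⟨i, hi, hx, hlt⟩)
    · refine ⟨a.length, ?_, ?_, ?_⟩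
      · simp [List.length_append]
      · rw [List.getD_append_right _ _ _ _ (le_refl _), Nat.sub_self,
          List.getD_cons_zero]
      · intro j hj
        rw [List.getD_append _ _ _ _ hj]
        exact ha _ (getD_mem' hj)
    · refine ⟨i, by simp [List.length_append]; omega, ?_, ?_⟩
      · rw [List.getD_append _ _ _ _ hi]; exact hx
      · intro j hj
        rw [List.getD_append _ _ _ _ (hj.trans hi)]
        exact hlt j hj

lemma rmax_split {b c : List ℕ} {m : ℕ} (hb : ∀ x ∈ b, x < m)
    (hc : ∀ x ∈ c, x < m) :
    RMAX (b ++ m :: c) = insert m (RMAX c) := by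
  have hlen : (b ++ m :: c).length = b.length + c.length + 1 := by
    simp [List.length_append]; omega
  have hgm : (b ++ m :: c).getD b.length 0 = m := by
    rw [List.getD_append_right _ _ _ _ (le_refl _), Nat.sub_self, List.getD_cons_zero]
  have hgc : ∀ k, k < c.length → (b ++ m :: c).getD (b.length + 1 + k) 0 = c.getD k 0 := by
    intro k hk
    rw [List.getD_append_right _ _ _ _ (by omega)]
    have : b.length + 1 + k - b.length = k + 1 := by omega
    rw [this, List.getD_cons_succ]
  ext x
  simp only [RMAX, Set.mem_setOf_eq, Set.mem_insert_iff]
  constructor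
  · rintro ⟨i, hi, hx, hlt⟩
    rcases lt_trichotomy i b.length with h1 | h1 | h1
    · exfalso
      have hxb : x ∈ b := by rw [← hx, List.getD_append _ _ _ _ h1]; exact getD_mem' h1
      have := hlt b.length h1 (by omega)
      rw [hgm] at this
      exact absurd (hb x hxb) (not_lt.mpr (le_of_lt this))
    · left; rw [← hx, h1, hgm]
    · right
      set k := i - b.length - 1 with hk
      have hik : i = b.length + 1 + k := by omega
      have hkc : k < c.length := by rw [hlen] at hi; omega
      refine ⟨k, hkc, ?_, ?_⟩
      · rw [← hx, hik, hgc k hkc]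
      · intro j hjk hjc
        have := hlt (b.length + 1 + j) (by omega) (by rw [hlen]; omega)
        rwa [hgc j hjc] at this
  · rintro (rfl | ⟨i, hi, hx, hlt⟩)
    · refine ⟨b.length, by rw [hlen]; omega, hgm, ?_⟩
      intro j hj1 hj2
      set k := j - b.length - 1 with hk
      have hjk : j = b.length + 1 + k := by omega
      have hkc : k < c.length := by rw [hlen] at hj2; omega
      rw [hjk, hgc k hkc]
      exact hc _ (getD_mem' hkc)
    · refine ⟨b.length + 1 + i, by rw [hlen]; omega, by rw [hgc i hi]; exact hx, ?_⟩
      intro j hj1 hj2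
      set k := j - b.length - 1 with hk
      have hjk : j = b.length + 1 + k := by omega
      have hkc : k < c.length := by rw [hlen] at hj2; omega
      rw [hjk, hgc k hkc]
      exact hlt k (by omega) hkc

lemma psi_perm (ψ : List ℕ → List ℕ) (hψ : PsiSpec ψ) :
    ∀ N (l : List ℕ), l.length ≤ N → l.Nodup → (ψ l).Perm l := by
  intro N
  induction N with
  | zero =>
    intro l hl _
    have : l = [] := List.length_eq_zero_iff.mp (Nat.le_zero.mp hl)
    subst this; rw [hψ.1]
  | succ N ih =>
    intro l hl hnd
    rcases eq_or_ne l [] with rfl | hne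
    · rw [hψ.1]
    · obtain ⟨a, m, b, rfl, hmax⟩ := max_split hne hnd
      rw [hψ.2 a b m hmax]
      have ha : a.Nodup := (List.nodup_append.mp hnd).1
      have hlena : a.length ≤ N := by
        simp only [List.length_append, List.length_cons] at hl; omega
      have hpa : (ψ a).Perm a := ih a hlena ha
      refine List.Perm.trans List.perm_middle (List.Perm.trans ?_ List.perm_middle.symm)
      exact ((List.Perm.append_left b hpa).trans List.perm_append_comm).cons m

lemma key (ψ : List ℕ → List ℕ) (hψ : PsiSpec ψ) :
    ∀ N (l : List ℕ), l.length ≤ N → l.Nodup → LMAX l = RMAX (ψ l) := by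
  intro N
  induction N with
  | zero =>
    intro l hl _
    have : l = [] := List.length_eq_zero_iff.mp (Nat.le_zero.mp hl)
    subst this
    rw [hψ.1]
    ext x
    simp [LMAX, RMAX]
  | succ N ih =>
    intro l hl hnd
    rcases eq_or_ne l [] with rfl | hne
    · rw [hψ.1]; ext x; simp [LMAX, RMAX]
    · obtain ⟨a, m, b, rfl, hmax⟩ := max_split hne hnd
      have ha : ∀ x ∈ a, x < m := fun x hx => hmax x (List.mem_append.mpr (Or.inl hx))
      have hb : ∀ x ∈ b, x < m := fun x hx => hmax x (List.mem_append.mpr (Or.inr hx))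
      have hand : a.Nodup := (List.nodup_append.mp hnd).1
      have hlena : a.length ≤ N := by
        simp only [List.length_append, List.length_cons] at hl; omega
      have hpa : (ψ a).Perm a := psi_perm ψ hψ N a hlena hand
      have hpsia : ∀ x ∈ ψ a, x < m := fun x hx => ha x (hpa.mem_iff.mp hx)
      rw [hψ.2 a b m hmax, lmax_split hmax, rmax_split hb hpsia,
        ih a hlena hand]

theorem lmax_eq_rmax_psi (ψ : List ℕ → List ℕ) (hψ : PsiSpec ψ)
    (n : ℕ) (π : List ℕ) (hperm : IsPermOf n π) :
    LMAX π = RMAX (ψ π) := by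
  have hnd : π.Nodup := by
    have : ((List.range n).map (· + 1)).Nodup :=
      (List.nodup_range (n := n)).map (fun a b h => by omega)
    exact hperm.symm.nodup this
  exact key ψ hψ π.length π (le_refl _) hnd
end

section
/- A permutation π avoids the pattern k-σ if and only if ψ(π) avoids the pattern σ-k, where σ is a contiguous pattern and k is greater than all letters of σ. Consequently ψ restricts to a bijection between (k-σ)-avoiding and (σ-k)-avoiding permutations of each length. -/
/-- a consecutive (contiguous) occurrence of `σ`. -/
def ContOcc (σ π : List ℕ) : Prop :=
  ∃ B w C, π = B ++ w ++ C ∧ FormsPOP σ w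

lemma split_unique {n : ℕ} : ∀ {l l' r r' : List ℕ}, l ++ n :: r = l' ++ n :: r' →
    n ∉ l → n ∉ l' → l = l' ∧ r = r' := by
  intro l
  induction l with
  | nil =>
    intro l' r r' h h1 h2
    cases l' with
    | nil => simpa using h
    | cons a t =>
      simp only [List.nil_append, List.cons_append, List.cons.injEq] at h
      exact absurd (show n ∈ a :: t by rw [h.1]; exact List.mem_cons_self) h2
  | cons a t ih =>
    intro l' r r' h h1 h2
    cases l' with
    | nil =>
      simp only [List.cons_append, List.nil_append, List.cons.injEq] at h
      exact absurd (h.1 ▸ (show a ∈ a :: t from List.mem_cons_self)) h1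
    | cons b t' =>
      simp only [List.cons_append, List.cons.injEq] at h
      have h1' : n ∉ t := fun hh => h1 (List.mem_cons_of_mem _ hh)
      have h2' : n ∉ t' := fun hh => h2 (List.mem_cons_of_mem _ hh)
      obtain ⟨he, hr⟩ := ih h.2 h1' h2'
      exact ⟨by rw [h.1, he], hr⟩

lemma split_unique' {n : ℕ} {l r X Y : List ℕ} (hlr : ∀ x ∈ l ++ r, x < n)
    (h : l ++ n :: r = X ++ n :: Y) : l = X ∧ r = Y := by
  have hnl : n ∉ l := fun hh => lt_irrefl n (hlr n (List.mem_append_left _ hh))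
  have hnr : n ∉ r := fun hh => lt_irrefl n (hlr n (List.mem_append_right _ hh))
  have hc : (l ++ n :: r).count n = 1 := by
    simp [List.count_append, List.count_cons, List.count_eq_zero.mpr hnl,
      List.count_eq_zero.mpr hnr]
  have hnX : n ∉ X := by
    intro hX
    rw [h] at hc
    have : 0 < X.count n := List.count_pos_iff.mpr hX
    simp [List.count_append, List.count_cons] at hc
    omega
  exact split_unique h hnl hnX

lemma mem_le_of_eq {n x : ℕ} {l r π : List ℕ} (hlr : ∀ y ∈ l ++ r, y < n)
    (hx : x ∈ π) (hπ : π = l ++ n :: r) : x ≤ n := by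
  rw [hπ] at hx
  rcases List.mem_append.mp hx with h | h
  · exact le_of_lt (hlr x (List.mem_append_left _ h))
  · rcases List.mem_cons.mp h with h | h
    · exact le_of_eq h
    · exact le_of_lt (hlr x (List.mem_append_right _ h))

lemma KS_split {σ l r : List ℕ} {n : ℕ} (hlr : ∀ x ∈ l ++ r, x < n) :
    OccursKS σ (l ++ n :: r) ↔ OccursKS σ l ∨ ContOcc σ r := by
  constructor
  · rintro ⟨A, x, B, w, C, hπ, hw, hx⟩
    -- locate n
    have hxle : x ≤ n := mem_le_of_eq hlr (show x ∈ l ++ n :: r by rw [hπ]; simp) rfl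
    have hnw : n ∉ w := fun hh => absurd (hx n hh) (by omega)
    have hn : n ∈ A ++ x :: (B ++ w ++ C) := by rw [← hπ]; simp
    simp only [List.mem_append, List.mem_cons] at hn
    rcases hn with hnA | hnx | (hnB | hnw') | hnC
    · -- n ∈ A
      obtain ⟨A1, A2, hA⟩ := List.append_of_mem hnA
      have heq : l ++ n :: r = A1 ++ n :: (A2 ++ x :: (B ++ w ++ C)) := by
        rw [hπ, hA]; try simp
      obtain ⟨-, hr⟩ := split_unique' hlr heq
      exact Or.inr ⟨A2 ++ x :: B, w, C, by rw [hr]; simp, hw⟩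
    · -- x = n
      have heq : l ++ n :: r = A ++ n :: (B ++ w ++ C) := by rw [hπ, hnx]
      obtain ⟨-, hr⟩ := split_unique' hlr heq
      exact Or.inr ⟨B, w, C, hr, hw⟩
    · -- n ∈ B
      obtain ⟨B1, B2, hB⟩ := List.append_of_mem hnB
      have heq : l ++ n :: r = (A ++ x :: B1) ++ n :: (B2 ++ w ++ C) := by
        rw [hπ, hB]; try simp
      obtain ⟨-, hr⟩ := split_unique' hlr heq
      exact Or.inr ⟨B2, w, C, hr, hw⟩
    · exact absurd hnw' hnw
    · -- n ∈ C
      obtain ⟨C1, C2, hC⟩ := List.append_of_mem hnC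
      have heq : l ++ n :: r = (A ++ x :: (B ++ w ++ C1)) ++ n :: C2 := by
        rw [hπ, hC]; try simp
      obtain ⟨hl, -⟩ := split_unique' hlr heq
      exact Or.inl ⟨A, x, B, w, C1, hl, hw, hx⟩
  · rintro (⟨A, x, B, w, C, hπ, hw, hx⟩ | ⟨B, w, C, hr, hw⟩)
    · exact ⟨A, x, B, w, C ++ n :: r, by rw [hπ]; simp, hw, hx⟩
    · refine ⟨l, n, B, w, C, by rw [hr], hw, fun y hy => ?_⟩
      exact hlr y (List.mem_append_right _ (by rw [hr]; simp [hy]))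

lemma SK_split {σ r q : List ℕ} {n : ℕ} (hrq : ∀ x ∈ r ++ q, x < n) :
    OccursSK σ (r ++ n :: q) ↔ ContOcc σ r ∨ OccursSK σ q := by
  constructor
  · rintro ⟨A, w, B, x, C, hπ, hw, hx⟩
    have hxle : x ≤ n := mem_le_of_eq hrq (show x ∈ r ++ n :: q by rw [hπ]; simp) rfl
    have hnw : n ∉ w := fun hh => absurd (hx n hh) (by omega)
    have hn : n ∈ A ++ w ++ B ++ x :: C := by rw [← hπ]; simp
    simp only [List.mem_append, List.mem_cons] at hn
    rcases hn with ((hnA | hnw') | hnB) | hnx | hnC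
    · -- n ∈ A
      obtain ⟨A1, A2, hA⟩ := List.append_of_mem hnA
      have heq : r ++ n :: q = A1 ++ n :: (A2 ++ w ++ B ++ x :: C) := by
        rw [hπ, hA]; try simp
      obtain ⟨-, hq⟩ := split_unique' hrq heq
      exact Or.inr ⟨A2, w, B, x, C, by simp [hq], hw, hx⟩
    · exact absurd hnw' hnw
    · -- n ∈ B
      obtain ⟨B1, B2, hB⟩ := List.append_of_mem hnB
      have heq : r ++ n :: q = (A ++ w ++ B1) ++ n :: (B2 ++ x :: C) := by
        rw [hπ, hB]; try simp
      obtain ⟨hr, -⟩ := split_unique' hrq heq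
      exact Or.inl ⟨A, w, B1, by rw [hr], hw⟩
    · -- x = n
      have heq : r ++ n :: q = (A ++ w ++ B) ++ n :: C := by rw [hπ, hnx]
      obtain ⟨hr, -⟩ := split_unique' hrq heq
      exact Or.inl ⟨A, w, B, by rw [hr], hw⟩
    · -- n ∈ C
      obtain ⟨C1, C2, hC⟩ := List.append_of_mem hnC
      have heq : r ++ n :: q = (A ++ w ++ B ++ x :: C1) ++ n :: C2 := by
        rw [hπ, hC]; try simp
      obtain ⟨hr, -⟩ := split_unique' hrq heq
      exact Or.inl ⟨A, w, B ++ x :: C1, by rw [hr]; simp, hw⟩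
  · rintro (⟨B, w, C, hr, hw⟩ | ⟨A, w, B, x, C, hq, hw, hx⟩)
    · refine ⟨B, w, C, n, q, by simp [hr], hw, fun y hy => ?_⟩
      exact hrq y (List.mem_append_left _ (by rw [hr]; simp [hy]))
    · exact ⟨r ++ n :: A, w, B, x, C, by rw [hq]; simp, hw, hx⟩

lemma exists_max_decomp {π : List ℕ} (hne : π ≠ []) (hnd : π.Nodup) :
    ∃ l n r, π = l ++ n :: r ∧ (∀ x ∈ l ++ r, x < n) := by
  have hpos : 0 < π.length := List.length_pos_iff.mpr hne
  set n := π.maximum_of_length_pos hpos with hn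
  have hnmem : n ∈ π := List.maximum_of_length_pos_mem hpos
  have hle : ∀ x ∈ π, x ≤ n := fun x hx => List.le_maximum_of_length_pos_of_mem hx hpos
  obtain ⟨l, r, hlr⟩ := List.append_of_mem hnmem
  refine ⟨l, n, r, hlr, fun x hx => ?_⟩
  have hx' : x ∈ π := by
    rw [hlr]; rcases List.mem_append.mp hx with h | h
    · exact List.mem_append_left _ h
    · exact List.mem_append_right _ (List.mem_cons_of_mem _ h)
  have hxle : x ≤ n := hle x hx'
  rcases lt_or_eq_of_le hxle with h | h
  · exact h
  · exfalso
    rw [hlr] at hnd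
    rw [List.nodup_append] at hnd
    rcases List.mem_append.mp hx with hxl | hxr
    · exact hnd.2.2 x hxl n List.mem_cons_self h
    · exact (List.nodup_cons.mp hnd.2.1).1 (h ▸ hxr)

lemma psi_main {ψ : List ℕ → List ℕ} (hψ : PsiSpec ψ) (σ : List ℕ) :
    ∀ N (π : List ℕ), π.length ≤ N → π.Nodup →
      (ψ π).Perm π ∧ (OccursKS σ π ↔ OccursSK σ (ψ π)) := by
  intro N
  induction N with
  | zero =>
    intro π hlen _
    have : π = [] := List.eq_nil_of_length_eq_zero (Nat.le_zero.mp hlen)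
    subst this
    rw [hψ.1]
    refine ⟨List.Perm.refl _, ?_⟩
    constructor
    · rintro ⟨A, x, B, w, C, hπ, -, -⟩
      exact absurd hπ.symm (by simp)
    · rintro ⟨A, w, B, x, C, hπ, -, -⟩
      exact absurd hπ.symm (by simp)
  | succ N ih =>
    intro π hlen hnd
    by_cases hne : π = []
    · exact ih π (by simp [hne]) hnd
    obtain ⟨l, n, r, hπ, hlr⟩ := exists_max_decomp hne hnd
    have hψπ : ψ π = r ++ n :: ψ l := by rw [hπ]; exact hψ.2 l r n hlr
    have hndl : l.Nodup := by
      rw [hπ, List.nodup_append] at hnd; exact hnd.1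
    have hlenl : l.length ≤ N := by
      have := hlen; rw [hπ] at this; simp at this; omega
    obtain ⟨hperml, hiffl⟩ := ih l hlenl hndl
    have hψl_lt : ∀ x ∈ r ++ ψ l, x < n := by
      intro x hx
      rcases List.mem_append.mp hx with h | h
      · exact hlr x (List.mem_append_right _ h)
      · exact hlr x (List.mem_append_left _ (hperml.mem_iff.mp h))
    constructor
    · rw [hψπ, hπ]
      exact ((List.Perm.append_left r (hperml.cons n)).trans
        (List.perm_middle.trans ((List.perm_append_comm.cons n).trans List.perm_middle.symm)))
    · rw [hψπ, hπ, KS_split hlr, SK_split hψl_lt, hiffl, or_comm]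

lemma psi_inj {ψ : List ℕ → List ℕ} (hψ : PsiSpec ψ) (σ : List ℕ) :
    ∀ N (π1 π2 : List ℕ), π1.length ≤ N → π1.Nodup → π2.Nodup →
      ψ π1 = ψ π2 → π1 = π2 := by
  intro N
  induction N with
  | zero =>
    intro π1 π2 hlen h1 h2 heq
    have h1' : π1 = [] := List.eq_nil_of_length_eq_zero (Nat.le_zero.mp hlen)
    subst h1'
    by_contra hne2
    have hne2' : π2 ≠ [] := fun h => hne2 h.symm
    obtain ⟨l, n, r, hπ, hlr⟩ := exists_max_decomp hne2' h2
    rw [hψ.1, hπ, hψ.2 l r n hlr] at heq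
    exact absurd heq.symm (by simp)
  | succ N ih =>
    intro π1 π2 hlen h1 h2 heq
    by_cases hne1 : π1 = []
    · subst hne1
      by_contra hne2
      have hne2' : π2 ≠ [] := fun h => hne2 h.symm
      obtain ⟨l, n, r, hπ, hlr⟩ := exists_max_decomp hne2' h2
      rw [hψ.1, hπ, hψ.2 l r n hlr] at heq
      exact absurd heq.symm (by simp)
    by_cases hne2 : π2 = []
    · subst hne2
      obtain ⟨l, n, r, hπ, hlr⟩ := exists_max_decomp hne1 h1
      rw [hψ.1, hπ, hψ.2 l r n hlr] at heq
      exact absurd heq (by simp)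
    obtain ⟨l1, n1, r1, hπ1, hlr1⟩ := exists_max_decomp hne1 h1
    obtain ⟨l2, n2, r2, hπ2, hlr2⟩ := exists_max_decomp hne2 h2
    have hψ1 : ψ π1 = r1 ++ n1 :: ψ l1 := by rw [hπ1]; exact hψ.2 _ _ _ hlr1
    have hψ2 : ψ π2 = r2 ++ n2 :: ψ l2 := by rw [hπ2]; exact hψ.2 _ _ _ hlr2
    have hndl1 : l1.Nodup := by rw [hπ1, List.nodup_append] at h1; exact h1.1
    have hndl2 : l2.Nodup := by rw [hπ2, List.nodup_append] at h2; exact h2.1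
    have hperm1 : (ψ l1).Perm l1 := (psi_main hψ σ l1.length l1 le_rfl hndl1).1
    have hperm2 : (ψ l2).Perm l2 := (psi_main hψ σ l2.length l2 le_rfl hndl2).1
    have hψl1_lt : ∀ x ∈ r1 ++ ψ l1, x < n1 := by
      intro x hx
      rcases List.mem_append.mp hx with h | h
      · exact hlr1 x (List.mem_append_right _ h)
      · exact hlr1 x (List.mem_append_left _ (hperm1.mem_iff.mp h))
    have hψl2_lt : ∀ x ∈ r2 ++ ψ l2, x < n2 := by
      intro x hx
      rcases List.mem_append.mp hx with h | h
      · exact hlr2 x (List.mem_append_right _ h)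
      · exact hlr2 x (List.mem_append_left _ (hperm2.mem_iff.mp h))
    rw [hψ1, hψ2] at heq
    -- n1 = n2
    have hn12 : n1 = n2 := by
      have h2in1 : n2 ∈ r1 ++ n1 :: ψ l1 := by rw [heq]; simp
      have h1in2 : n1 ∈ r2 ++ n2 :: ψ l2 := by rw [← heq]; simp
      have ha : n2 ≤ n1 := mem_le_of_eq hψl1_lt h2in1 rfl
      have hb : n1 ≤ n2 := mem_le_of_eq hψl2_lt h1in2 rfl
      omega
    subst hn12
    obtain ⟨hr, hq⟩ := split_unique' hψl1_lt heq
    have hlen1 : l1.length ≤ N := by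
      have := hlen; rw [hπ1] at this; simp at this; omega
    have := ih l1 l2 hlen1 hndl1 hndl2 hq
    rw [hπ1, hπ2, hr, this]

lemma psi_surj {ψ : List ℕ → List ℕ} (hψ : PsiSpec ψ) :
    ∀ N (τ : List ℕ), τ.length ≤ N → τ.Nodup →
      ∃ π, π.Nodup ∧ π.Perm τ ∧ ψ π = τ := by
  intro N
  induction N with
  | zero =>
    intro τ hlen _
    have : τ = [] := List.eq_nil_of_length_eq_zero (Nat.le_zero.mp hlen)
    subst this
    exact ⟨[], List.nodup_nil, List.Perm.refl _, hψ.1⟩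
  | succ N ih =>
    intro τ hlen hnd
    by_cases hne : τ = []
    · subst hne; exact ⟨[], List.nodup_nil, List.Perm.refl _, hψ.1⟩
    obtain ⟨B, m, C, hτ, hBC⟩ := exists_max_decomp hne hnd
    have hndC : C.Nodup := by
      rw [hτ, List.nodup_append, List.nodup_cons] at hnd
      exact hnd.2.1.2
    have hlenC : C.length ≤ N := by
      have := hlen; rw [hτ] at this; simp at this; omega
    obtain ⟨l, hndl, hperml, hψl⟩ := ih C hlenC hndC
    have hlB_lt : ∀ x ∈ l ++ B, x < m := by
      intro x hx
      rcases List.mem_append.mp hx with h | h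
      · exact hBC x (List.mem_append_right _ (hperml.mem_iff.mp h))
      · exact hBC x (List.mem_append_left _ h)
    refine ⟨l ++ m :: B, ?_, ?_, ?_⟩
    · rw [List.nodup_append, List.nodup_cons]
      rw [hτ, List.nodup_append, List.nodup_cons] at hnd
      refine ⟨hndl, ⟨fun hm => absurd (hlB_lt m (List.mem_append_right _ hm)) (lt_irrefl m), hnd.1⟩,
        fun a ha b hb hab => ?_⟩
      rcases List.mem_cons.mp hb with h | h
      · exact absurd (hlB_lt a (List.mem_append_left _ ha)) (by omega)
      · exact hnd.2.2 b h a (List.mem_cons_of_mem m (hperml.mem_iff.mp ha)) hab.symm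
    · rw [hτ]
      exact (List.perm_middle.trans (((hperml.append_right B).cons m).trans
        ((List.perm_append_comm.cons m).trans List.perm_middle.symm)))
    · rw [hψ.2 l B m hlB_lt, hψl, hτ]

/-- A permutation `π` avoids `k-σ` iff `ψ(π)` avoids `σ-k`; consequently `ψ`
restricts to a bijection between `(k-σ)`-avoiding and `(σ-k)`-avoiding
permutations of each length. -/
theorem psi_avoid_ks_iff_avoid_sk (ψ : List ℕ → List ℕ) (hψ : PsiSpec ψ)
    (σ : List ℕ) (hσ : σ ≠ []) :
    (∀ (n : ℕ) (π : List ℕ), IsPermOf n π →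
      (¬ OccursKS σ π ↔ ¬ OccursSK σ (ψ π))) ∧
    (∀ n : ℕ, Set.BijOn ψ
      {π | IsPermOf n π ∧ ¬ OccursKS σ π}
      {π | IsPermOf n π ∧ ¬ OccursSK σ π}) := by
  have hrange_nd : ∀ n : ℕ, ((List.range n).map (· + 1)).Nodup := fun n =>
    List.Nodup.map (fun a b h => by omega) List.nodup_range
  have hnd_of : ∀ {n : ℕ} {π : List ℕ}, IsPermOf n π → π.Nodup := by
    intro n π h
    exact (hrange_nd n).perm h.symm
  constructor
  · intro n π hperm
    exact not_congr (psi_main hψ σ π.length π le_rfl (hnd_of hperm)).2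
  · intro n
    refine ⟨?_, ?_, ?_⟩
    · rintro π ⟨hperm, havoid⟩
      have hnd := hnd_of hperm
      obtain ⟨hp, hiff⟩ := psi_main hψ σ π.length π le_rfl hnd
      exact ⟨hp.trans hperm, fun h => havoid (hiff.mpr h)⟩
    · rintro π1 ⟨h1, -⟩ π2 ⟨h2, -⟩ heq
      exact psi_inj hψ σ π1.length π1 π2 le_rfl (hnd_of h1) (hnd_of h2) heq
    · rintro τ ⟨hperm, havoid⟩
      have hnd := hnd_of hperm
      obtain ⟨π, hndπ, hpermπ, hψπ⟩ := psi_surj hψ τ.length τ le_rfl hnd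
      have hpermn : IsPermOf n π := hpermπ.trans hperm
      obtain ⟨-, hiff⟩ := psi_main hψ σ π.length π le_rfl hndπ
      exact ⟨π, ⟨hpermn, fun h => havoid (hψπ ▸ hiff.mp h)⟩, hψπ⟩
end

section
/- Let a_n be the number of permutations of length n avoiding 3-12-3, and B_n the n-th Bell number. Then for all n ≥ 0, a_{n+1} = Σ_{i=0}^{n} C(n,i) B_i B_{n-i}. -/
/-- Occurrence of the pattern `3-12-3` in `π`. -/
def Occ3123 (π : List ℕ) : Prop :=
  ∃ i j l, i < j ∧ j + 1 < l ∧ l < π.length ∧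
    π.getD j 0 < π.getD (j + 1) 0 ∧
    π.getD (j + 1) 0 < π.getD i 0 ∧ π.getD (j + 1) 0 < π.getD l 0

namespace A3123

def Occ312 (π : List ℕ) : Prop :=
  ∃ i j, i < j ∧ j + 1 < π.length ∧
    π.getD j 0 < π.getD (j + 1) 0 ∧ π.getD (j + 1) 0 < π.getD i 0

def Occ123 (π : List ℕ) : Prop :=
  ∃ j l, j + 1 < l ∧ l < π.length ∧
    π.getD j 0 < π.getD (j + 1) 0 ∧ π.getD (j + 1) 0 < π.getD l 0

def Asc (π : List ℕ) : Prop :=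
  ∃ j, j + 1 < π.length ∧ π.getD j 0 < π.getD (j + 1) 0

lemma getD_mem {l : List ℕ} {t : ℕ} (h : t < l.length) : l.getD t 0 ∈ l := by
  rw [List.getD_eq_getElem _ _ h]; exact List.getElem_mem _

section Split
variable {α β : List ℕ} {M : ℕ}

lemma len_split : (α ++ M :: β).length = α.length + 1 + β.length := by
  simp [List.length_append]; omega

lemma getD_lo {t : ℕ} (ht : t < α.length) :
    (α ++ M :: β).getD t 0 = α.getD t 0 := List.getD_append _ _ _ _ ht

lemma getD_mid : (α ++ M :: β).getD α.length 0 = M := by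
  rw [List.getD_append_right _ _ _ _ le_rfl, Nat.sub_self]; rfl

lemma getD_hi {t : ℕ} (ht : α.length < t) :
    (α ++ M :: β).getD t 0 = β.getD (t - α.length - 1) 0 := by
  rw [List.getD_append_right _ _ _ _ ht.le]
  have h : t - α.length = (t - α.length - 1) + 1 := by omega
  conv_lhs => rw [h]
  rw [List.getD_cons_succ]

lemma getD_lt_max (hα : ∀ x ∈ α, x < M) (hβ : ∀ x ∈ β, x < M)
    {t : ℕ} (ht : t < (α ++ M :: β).length) (hta : t ≠ α.length) :
    (α ++ M :: β).getD t 0 < M := by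
  rcases lt_or_gt_of_ne hta with h | h
  · rw [getD_lo h]; exact hα _ (getD_mem h)
  · rw [getD_hi h]
    refine hβ _ (getD_mem ?_)
    rw [len_split] at ht; omega

lemma occ312_split (hα : ∀ x ∈ α, x < M) (hβ : ∀ x ∈ β, x < M) :
    Occ312 (α ++ M :: β) ↔ Occ312 α ∨ Asc β := by
  have hlen := len_split (α := α) (β := β) (M := M)
  constructor
  · rintro ⟨i, j, hij, hj1, h1, h2⟩
    rcases lt_trichotomy (j + 1) α.length with hc | hc | hc
    · left
      refine ⟨i, j, hij, hc, ?_, ?_⟩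
      · rwa [getD_lo (by omega), getD_lo hc] at h1
      · rwa [getD_lo hc, getD_lo (by omega)] at h2
    · exfalso
      rw [hc, getD_mid] at h2
      have := getD_lt_max hα hβ (t := i) (by omega) (by omega)
      omega
    · rcases Nat.lt_or_ge α.length j with hj | hj
      · right
        refine ⟨j - α.length - 1, ?_, ?_⟩
        · omega
        · rw [getD_hi hj, getD_hi (by omega)] at h1
          have e : j + 1 - α.length - 1 = (j - α.length - 1) + 1 := by omega
          rwa [e] at h1
      · exfalso
        have hj' : j = α.length := by omega
        rw [hj', getD_mid] at h1
        have := getD_lt_max hα hβ (t := α.length + 1) (by omega) (by omega)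
        omega
  · rintro (⟨i, j, hij, hj1, h1, h2⟩ | ⟨j, hj1, h1⟩)
    · exact ⟨i, j, hij, by omega, by
        rwa [getD_lo (by omega), getD_lo hj1], by
        rwa [getD_lo hj1, getD_lo (by omega)]⟩
    · refine ⟨α.length, α.length + 1 + j, by omega, by omega, ?_, ?_⟩
      · rw [getD_hi (by omega), getD_hi (by omega)]
        have e1 : α.length + 1 + j - α.length - 1 = j := by omega
        have e2 : α.length + 1 + j + 1 - α.length - 1 = j + 1 := by omega
        rwa [e1, e2]
      · rw [getD_mid, getD_hi (by omega)]
        have e2 : α.length + 1 + j + 1 - α.length - 1 = j + 1 := by omega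
        rw [e2]
        exact hβ _ (getD_mem hj1)

lemma occ123_split (hα : ∀ x ∈ α, x < M) (hβ : ∀ x ∈ β, x < M) :
    Occ123 (α ++ M :: β) ↔ Asc α ∨ Occ123 β := by
  have hlen := len_split (α := α) (β := β) (M := M)
  constructor
  · rintro ⟨j, l, hjl, hl, h1, h2⟩
    rcases lt_trichotomy (j + 1) α.length with hc | hc | hc
    · left
      exact ⟨j, hc, by rwa [getD_lo (by omega), getD_lo hc] at h1⟩
    · exfalso
      rw [hc, getD_mid] at h2
      have := getD_lt_max hα hβ (t := l) (by omega) (by omega)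
      omega
    · rcases Nat.lt_or_ge α.length j with hj | hj
      · right
        refine ⟨j - α.length - 1, l - α.length - 1, by omega, by omega, ?_, ?_⟩
        · rw [getD_hi hj, getD_hi (by omega)] at h1
          have e : j + 1 - α.length - 1 = (j - α.length - 1) + 1 := by omega
          rwa [e] at h1
        · rw [getD_hi (by omega), getD_hi (by omega : α.length < l)] at h2
          have e : j + 1 - α.length - 1 = (j - α.length - 1) + 1 := by omega
          rwa [e] at h2
      · exfalso
        have hj' : j = α.length := by omega
        rw [hj', getD_mid] at h1
        have := getD_lt_max hα hβ (t := α.length + 1) (by omega) (by omega)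
        omega
  · rintro (⟨j, hj1, h1⟩ | ⟨j, l, hjl, hl, h1, h2⟩)
    · refine ⟨j, α.length, by omega, by omega, ?_, ?_⟩
      · rwa [getD_lo (by omega), getD_lo hj1]
      · rw [getD_lo hj1, getD_mid]
        exact hα _ (getD_mem hj1)
    · refine ⟨α.length + 1 + j, α.length + 1 + l, by omega, by omega, ?_, ?_⟩
      · rw [getD_hi (by omega), getD_hi (by omega)]
        have e1 : α.length + 1 + j - α.length - 1 = j := by omega
        have e2 : α.length + 1 + j + 1 - α.length - 1 = j + 1 := by omega
        rwa [e1, e2]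
      · rw [getD_hi (by omega), getD_hi (by omega)]
        have e2 : α.length + 1 + j + 1 - α.length - 1 = j + 1 := by omega
        have e3 : α.length + 1 + l - α.length - 1 = l := by omega
        rwa [e2, e3]

lemma occ3123_split (hα : ∀ x ∈ α, x < M) (hβ : ∀ x ∈ β, x < M) :
    Occ3123 (α ++ M :: β) ↔ Occ312 α ∨ Occ123 β := by
  have hlen := len_split (α := α) (β := β) (M := M)
  constructor
  · rintro ⟨i, j, l, hij, hjl, hl, h1, h2, h3⟩
    rcases lt_trichotomy (j + 1) α.length with hc | hc | hc
    · left
      refine ⟨i, j, hij, hc, ?_, ?_⟩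
      · rwa [getD_lo (by omega), getD_lo hc] at h1
      · rwa [getD_lo hc, getD_lo (by omega)] at h2
    · exfalso
      rw [hc, getD_mid] at h2
      have := getD_lt_max hα hβ (t := i) (by omega) (by omega)
      omega
    · rcases Nat.lt_or_ge α.length j with hj | hj
      · right
        refine ⟨j - α.length - 1, l - α.length - 1, by omega, by omega, ?_, ?_⟩
        · rw [getD_hi hj, getD_hi (by omega)] at h1
          have e : j + 1 - α.length - 1 = (j - α.length - 1) + 1 := by omega
          rwa [e] at h1
        · rw [getD_hi (by omega), getD_hi (by omega : α.length < l)] at h3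
          have e : j + 1 - α.length - 1 = (j - α.length - 1) + 1 := by omega
          rwa [e] at h3
      · exfalso
        have hj' : j = α.length := by omega
        rw [hj', getD_mid] at h1
        have := getD_lt_max hα hβ (t := α.length + 1) (by omega) (by omega)
        omega
  · rintro (⟨i, j, hij, hj1, h1, h2⟩ | ⟨j, l, hjl, hl, h1, h2⟩)
    · refine ⟨i, j, α.length, hij, by omega, by omega, ?_, ?_, ?_⟩
      · rwa [getD_lo (by omega), getD_lo hj1]
      · rwa [getD_lo hj1, getD_lo (by omega)]
      · rw [getD_lo hj1, getD_mid]
        exact hα _ (getD_mem hj1)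
    · refine ⟨α.length, α.length + 1 + j, α.length + 1 + l, by omega, by omega, by omega,
        ?_, ?_, ?_⟩
      · rw [getD_hi (by omega), getD_hi (by omega)]
        have e1 : α.length + 1 + j - α.length - 1 = j := by omega
        have e2 : α.length + 1 + j + 1 - α.length - 1 = j + 1 := by omega
        rwa [e1, e2]
      · rw [getD_hi (by omega), getD_mid]
        have e2 : α.length + 1 + j + 1 - α.length - 1 = j + 1 := by omega
        rw [e2]
        exact hβ _ (getD_mem (by omega))
      · rw [getD_hi (by omega), getD_hi (by omega)]
        have e2 : α.length + 1 + j + 1 - α.length - 1 = j + 1 := by omega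
        have e3 : α.length + 1 + l - α.length - 1 = l := by omega
        rwa [e2, e3]

end Split
open scoped Classical in
noncomputable def cnt (P : List ℕ → Prop) (S : Finset ℕ) : ℕ :=
  ((S.sort (· ≤ ·)).permutations.toFinset.filter P).card

open scoped Classical

lemma mem_perms {S : Finset ℕ} {l : List ℕ} :
    l ∈ (S.sort (· ≤ ·)).permutations.toFinset ↔ (↑l : Multiset ℕ) = S.val := by
  rw [List.mem_toFinset, List.mem_permutations, ← Multiset.coe_eq_coe, Finset.sort_eq]

lemma toFinset_val_of_nodup {l : List ℕ} (h : l.Nodup) : l.toFinset.val = ↑l := by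
  have := List.dedup_eq_self.mpr h
  simp [List.toFinset, Multiset.toFinset, Multiset.dedup, this]
  exact congrArg (fun x : List ℕ => (x : Multiset ℕ)) this

lemma decomp {π : List ℕ} {M : ℕ} (hM : M ∈ π) :
    π.takeWhile (· ≠ M) ++ M :: (π.dropWhile (· ≠ M)).tail = π := by
  have hne : π.dropWhile (· ≠ M) ≠ [] := by
    intro h
    have h2 := List.takeWhile_append_dropWhile (p := fun x => decide (x ≠ M)) (l := π)
    rw [h, List.append_nil] at h2
    have := List.mem_takeWhile_imp (h2 ▸ hM)
    simp at this
  have hhead : (π.dropWhile (· ≠ M)).head hne = M := by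
    have := List.head_dropWhile_not (fun x => decide (x ≠ M)) (l := π) hne
    simpa using this
  have hd : π.dropWhile (· ≠ M) = M :: (π.dropWhile (· ≠ M)).tail := by
    conv_lhs => rw [← List.cons_head_tail hne, hhead]
  conv_rhs => rw [← List.takeWhile_append_dropWhile (p := fun x => decide (x ≠ M)) (l := π), hd]

lemma elem_lt_max {S : Finset ℕ} (hS : S.Nonempty) {x : ℕ} (hx : x ∈ S.erase (S.max' hS)) :
    x < S.max' hS := by
  rcases Finset.mem_erase.mp hx with ⟨hne, hxS⟩
  exact lt_of_le_of_ne (S.le_max' x hxS) hne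

lemma cnt_split (P Q R : List ℕ → Prop) (S : Finset ℕ) (hS : S.Nonempty)
    (hR : ∀ α β : List ℕ, (∀ x ∈ α, x < S.max' hS) → (∀ x ∈ β, x < S.max' hS) →
      (R (α ++ S.max' hS :: β) ↔ P α ∧ Q β)) :
    cnt R S = ∑ T ∈ (S.erase (S.max' hS)).powerset,
      cnt P T * cnt Q ((S.erase (S.max' hS)) \ T) := by
  set M := S.max' hS with hM
  set S' := S.erase M with hS'def
  have hMS : M ∈ S := S.max'_mem hS
  have hSval : M ::ₘ S'.val = S.val := by
    rw [hS'def, Finset.erase_val, Multiset.cons_erase (by exact_mod_cast hMS)]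
  have hlt : ∀ x ∈ S', x < M := fun x hx => elem_lt_max hS hx
  have key : (S'.powerset.sigma fun T =>
        ((T.sort (· ≤ ·)).permutations.toFinset.filter P) ×ˢ
        (((S' \ T).sort (· ≤ ·)).permutations.toFinset.filter Q)).card
      = ((S.sort (· ≤ ·)).permutations.toFinset.filter R).card := by
    refine Finset.card_bij' (fun x _ => x.2.1 ++ M :: x.2.2)
      (fun π _ => ⟨(π.takeWhile (· ≠ M)).toFinset,
        (π.takeWhile (· ≠ M), (π.dropWhile (· ≠ M)).tail)⟩) ?hi ?hj ?left ?right
    case hi =>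
      rintro ⟨T, α, β⟩ hx
      rw [Finset.mem_sigma, Finset.mem_powerset, Finset.mem_product] at hx
      obtain ⟨hT, h1, h2⟩ := hx
      rw [Finset.mem_filter, mem_perms] at h1 h2
      obtain ⟨hαv, hP⟩ := h1
      obtain ⟨hβv, hQ⟩ := h2
      have hTle : T.val ≤ S'.val := Finset.val_le_iff.mpr hT
      have hα : ∀ x ∈ α, x < M := by
        intro x hx
        apply hlt
        have : x ∈ T.val := hαv ▸ (Multiset.mem_coe.mpr hx)
        exact hT this
      have hβ : ∀ x ∈ β, x < M := by
        intro x hx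
        have : x ∈ (S' \ T).val := hβv ▸ (Multiset.mem_coe.mpr hx)
        exact hlt x (Finset.sdiff_subset this)
      rw [Finset.mem_filter, mem_perms]
      constructor
      · show ((α ++ M :: β : List ℕ) : Multiset ℕ) = S.val
        rw [← Multiset.coe_add, ← Multiset.cons_coe, hαv, hβv, Finset.sdiff_val,
          Multiset.add_cons, add_tsub_cancel_of_le hTle, hSval]
      · exact (hR α β hα hβ).mpr ⟨hP, hQ⟩
    case hj =>
      intro π hπ
      rw [Finset.mem_filter, mem_perms] at hπ
      obtain ⟨hπv, hRπ⟩ := hπ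
      have hMπ : M ∈ π := by
        rw [← Multiset.mem_coe, hπv]; exact_mod_cast hMS
      have hdec := decomp hMπ
      set α := π.takeWhile (· ≠ M) with hα_def
      set β := (π.dropWhile (· ≠ M)).tail with hβ_def
      have hπnd : π.Nodup := by
        rw [← Multiset.coe_nodup, hπv]; exact S.nodup
      have hαnd : α.Nodup := (List.takeWhile_sublist _).nodup hπnd
      have hα_ne : ∀ x ∈ α, x ≠ M := by
        intro x hx
        simpa using List.mem_takeWhile_imp hx
      have hval : (↑α : Multiset ℕ) + (↑β : Multiset ℕ) = S'.val := by
        have h1 : (↑α : Multiset ℕ) + (M ::ₘ ↑β) = S.val := by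
          rw [Multiset.cons_coe, Multiset.coe_add, hdec, hπv]
        have h2 : M ::ₘ ((↑α : Multiset ℕ) + ↑β) = M ::ₘ S'.val := by
          rw [← Multiset.add_cons, h1, hSval]
        exact (Multiset.cons_inj_right M).mp h2
      have hTval : α.toFinset.val = (↑α : Multiset ℕ) := toFinset_val_of_nodup hαnd
      have hmemπ : ∀ x ∈ π, x ∈ S := by
        intro x hx
        have : x ∈ S.val := hπv ▸ Multiset.mem_coe.mpr hx
        exact this
      have hαmem : ∀ x ∈ α, x ∈ S' := by
        intro x hx
        refine Finset.mem_erase.mpr ⟨hα_ne x hx, hmemπ x ?_⟩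
        rw [← hdec]; exact List.mem_append_left _ hx
      have hα : ∀ x ∈ α, x < M := fun x hx => hlt x (hαmem x hx)
      have hβ : ∀ x ∈ β, x < M := by
        intro x hx
        apply hlt
        have : x ∈ (↑α : Multiset ℕ) + ↑β :=
          Multiset.mem_add.mpr (Or.inr (Multiset.mem_coe.mpr hx))
        rw [hval] at this
        exact this
      rw [Finset.mem_sigma, Finset.mem_powerset, Finset.mem_product]
      refine ⟨?_, ?_, ?_⟩
      · intro x hx
        exact hαmem x (List.mem_toFinset.mp hx)
      · rw [Finset.mem_filter, mem_perms, hTval]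
        refine ⟨rfl, ?_⟩
        rw [← hdec] at hRπ
        exact ((hR α β hα hβ).mp hRπ).1
      · rw [Finset.mem_filter, mem_perms]
        constructor
        · rw [Finset.sdiff_val, hTval, ← hval, add_tsub_cancel_left]
        · rw [← hdec] at hRπ
          exact ((hR α β hα hβ).mp hRπ).2
    case left =>
      rintro ⟨T, α, β⟩ hx
      rw [Finset.mem_sigma, Finset.mem_powerset, Finset.mem_product] at hx
      obtain ⟨hT, h1, h2⟩ := hx
      rw [Finset.mem_filter, mem_perms] at h1 h2
      obtain ⟨hαv, _⟩ := h1
      have hα_ne : ∀ x ∈ α, x ≠ M := by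
        intro x hx
        have hxT : x ∈ T := by
          rw [← Finset.mem_val, ← hαv]; exact Multiset.mem_coe.mpr hx
        exact (hlt x (hT hxT)).ne
      have htw : (α ++ M :: β).takeWhile (· ≠ M) = α := by
        rw [List.takeWhile_append_of_pos (by intro a ha; simpa using hα_ne a ha),
          List.takeWhile_cons_of_neg (by simp), List.append_nil]
      have hdw : (α ++ M :: β).dropWhile (· ≠ M) = M :: β := by
        rw [List.dropWhile_append_of_pos (by intro a ha; simpa using hα_ne a ha),
          List.dropWhile_cons_of_neg (by simp)]
      have hTf : α.toFinset = T := by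
        ext x
        rw [List.mem_toFinset, ← Multiset.mem_coe, hαv, Finset.mem_val]
      show (⟨((α ++ M :: β).takeWhile (· ≠ M)).toFinset,
        ((α ++ M :: β).takeWhile (· ≠ M), ((α ++ M :: β).dropWhile (· ≠ M)).tail)⟩ :
          (_ : Finset ℕ) × (List ℕ × List ℕ)) = ⟨T, (α, β)⟩
      rw [htw, hdw, hTf]
      rfl
    case right =>
      intro π hπ
      rw [Finset.mem_filter, mem_perms] at hπ
      have hMπ : M ∈ π := by
        rw [← Multiset.mem_coe, hπ.1]; exact_mod_cast hMS
      exact decomp hMπ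
  rw [cnt, ← key, Finset.card_sigma]
  apply Finset.sum_congr rfl
  intro T _
  rw [Finset.card_product, cnt, cnt]

lemma not_occ312_nil : ¬ Occ312 [] := by
  rintro ⟨i, j, _, h, _⟩; simp at h

lemma not_occ123_nil : ¬ Occ123 [] := by
  rintro ⟨j, l, _, h, _⟩; simp at h

lemma not_occ3123_nil : ¬ Occ3123 [] := by
  rintro ⟨i, j, l, _, _, h, _⟩; simp at h

lemma cnt_empty {P : List ℕ → Prop} (h : P []) : cnt P ∅ = 1 := by
  rw [cnt, Finset.sort_empty]
  rw [show ([] : List ℕ).permutations = [[]] from List.permutations_nil]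
  simp [Finset.filter_singleton, h]

lemma cnt_notAsc (S : Finset ℕ) : cnt (fun l => ¬ Asc l) S = 1 := by
  haveI : IsTrans ℕ (· > ·) := ⟨fun a b c h1 h2 => lt_trans h2 h1⟩
  haveI : IsAntisymm ℕ (· > ·) := ⟨fun a b h1 h2 => by omega⟩
  set r := (S.sort (· ≤ ·)).reverse with hr
  have hrval : (↑r : Multiset ℕ) = S.val := by
    rw [hr, ← Finset.sort_eq S (· ≤ ·), Multiset.coe_eq_coe]
    exact List.reverse_perm _
  have hsorted : List.Pairwise (· > ·) r := by
    rw [hr, List.pairwise_reverse]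
    exact (Finset.sortedLT_sort S).pairwise
  have hnoasc : ¬ Asc r := by
    rintro ⟨j, hj, hlt⟩
    have h1 : j < r.length := by omega
    rw [List.getD_eq_getElem _ _ h1, List.getD_eq_getElem _ _ hj] at hlt
    have := List.pairwise_iff_getElem.mp hsorted j (j + 1) h1 hj (by omega)
    omega
  rw [cnt, Finset.card_eq_one]
  refine ⟨r, ?_⟩
  apply Finset.eq_singleton_iff_unique_mem.mpr
  constructor
  · simp only [Finset.mem_filter, mem_perms]
    exact ⟨hrval, hnoasc⟩
  · intro π hπ
    simp only [Finset.mem_filter, mem_perms] at hπ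
    obtain ⟨hπv, hπa⟩ := hπ
    have hπnd : π.Nodup := by
      rw [← Multiset.coe_nodup, hπv]; exact S.nodup
    have hπs : List.Pairwise (· > ·) π := by
      rw [← List.isChain_iff_pairwise, List.isChain_iff_getElem]
      intro i h
      have h1 : i < π.length := by omega
      have h2 : i + 1 < π.length := by omega
      have hne : π[i] ≠ π[i + 1] := by
        intro he
        have := (List.Nodup.getElem_inj_iff hπnd).mp he
        omega
      have hnlt : ¬ π[i] < π[i + 1] := by
        intro hlt
        exact hπa ⟨i, h2, by rwa [List.getD_eq_getElem _ _ h1, List.getD_eq_getElem _ _ h2]⟩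
      omega
    exact List.Perm.eq_of_pairwise' hπs hsorted
      (Multiset.coe_eq_coe.mp (hπv.trans hrval.symm))

lemma sum_powerset_card {S : Finset ℕ} (f : ℕ → ℕ) :
    ∑ T ∈ S.powerset, f T.card
      = ∑ j ∈ Finset.range (S.card + 1), Nat.choose S.card j * f j := by
  rw [Finset.sum_powerset]
  apply Finset.sum_congr rfl
  intro j _
  have : ∀ T ∈ Finset.powersetCard j S, f T.card = f j := by
    intro T hT
    rw [(Finset.mem_powersetCard.mp hT).2]
  rw [Finset.sum_congr rfl this, Finset.sum_const, Finset.card_powersetCard, smul_eq_mul]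

lemma cnt_notOcc312 (B : ℕ → ℕ) (hB0 : B 0 = 1)
    (hBrec : ∀ m, B (m + 1) = ∑ i ∈ Finset.range (m + 1), Nat.choose m i * B i)
    (S : Finset ℕ) : cnt (fun l => ¬ Occ312 l) S = B S.card := by
  suffices H : ∀ n (S : Finset ℕ), S.card = n → cnt (fun l => ¬ Occ312 l) S = B S.card by
    exact H S.card S rfl
  intro n
  induction n using Nat.strong_induction_on with
  | _ n ih =>
  intro S hn
  rcases S.eq_empty_or_nonempty with rfl | hS
  · simpa [hB0] using cnt_empty not_occ312_nil
  · set M := S.max' hS with hM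
    set S' := S.erase M with hS'def
    have hcard : S'.card + 1 = S.card := by
      rw [hS'def, Finset.card_erase_of_mem (S.max'_mem hS)]
      have : 0 < S.card := Finset.card_pos.mpr hS
      omega
    rw [cnt_split (fun l => ¬ Occ312 l) (fun l => ¬ Asc l) (fun l => ¬ Occ312 l) S hS
      (by
        intro α β hα hβ
        show ¬ Occ312 (α ++ S.max' hS :: β) ↔ ¬ Occ312 α ∧ ¬ Asc β
        rw [occ312_split hα hβ]
        tauto)]
    have : ∀ T ∈ S'.powerset,
        cnt (fun l => ¬ Occ312 l) T * cnt (fun l => ¬ Asc l) (S' \ T) = B T.card := by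
      intro T hT
      rw [cnt_notAsc, mul_one]
      exact ih T.card (by
        have := Finset.card_le_card (Finset.mem_powerset.mp hT)
        omega) T rfl
    rw [Finset.sum_congr rfl this, sum_powerset_card B, ← hBrec, hcard]

lemma cnt_notOcc123 (B : ℕ → ℕ) (hB0 : B 0 = 1)
    (hBrec : ∀ m, B (m + 1) = ∑ i ∈ Finset.range (m + 1), Nat.choose m i * B i)
    (S : Finset ℕ) : cnt (fun l => ¬ Occ123 l) S = B S.card := by
  suffices H : ∀ n (S : Finset ℕ), S.card = n → cnt (fun l => ¬ Occ123 l) S = B S.card by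
    exact H S.card S rfl
  intro n
  induction n using Nat.strong_induction_on with
  | _ n ih =>
  intro S hn
  rcases S.eq_empty_or_nonempty with rfl | hS
  · simpa [hB0] using cnt_empty not_occ123_nil
  · set M := S.max' hS with hM
    set S' := S.erase M with hS'def
    have hcard : S'.card + 1 = S.card := by
      rw [hS'def, Finset.card_erase_of_mem (S.max'_mem hS)]
      have : 0 < S.card := Finset.card_pos.mpr hS
      omega
    rw [cnt_split (fun l => ¬ Asc l) (fun l => ¬ Occ123 l) (fun l => ¬ Occ123 l) S hS
      (by
        intro α β hα hβ
        show ¬ Occ123 (α ++ S.max' hS :: β) ↔ ¬ Asc α ∧ ¬ Occ123 β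
        rw [occ123_split hα hβ]
        tauto)]
    have : ∀ T ∈ S'.powerset,
        cnt (fun l => ¬ Asc l) T * cnt (fun l => ¬ Occ123 l) (S' \ T)
          = B (S'.card - T.card) := by
      intro T hT
      have hsub := Finset.mem_powerset.mp hT
      have hc2 : (S' \ T).card = S'.card - T.card := Finset.card_sdiff_of_subset hsub
      have hle := Finset.card_le_card hsub
      rw [cnt_notAsc, one_mul, ih (S' \ T).card (by omega) _ rfl, hc2]
    rw [Finset.sum_congr rfl this]
    have flip : ∑ T ∈ S'.powerset, B (S'.card - T.card)
        = ∑ j ∈ Finset.range (S'.card + 1), Nat.choose S'.card j * B (S'.card - j) :=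
      sum_powerset_card (fun j => B (S'.card - j))
    rw [flip, ← hcard, hBrec]
    rw [← Finset.sum_range_reflect (fun j => Nat.choose S'.card j * B (S'.card - j))
      (S'.card + 1)]
    apply Finset.sum_congr rfl
    intro j hj
    rw [Finset.mem_range] at hj
    have h1 : S'.card + 1 - 1 - j = S'.card - j := by omega
    rw [h1, Nat.choose_symm (by omega), (by omega : S'.card - (S'.card - j) = j)]

lemma cnt_notOcc3123 (B : ℕ → ℕ) (hB0 : B 0 = 1)
    (hBrec : ∀ m, B (m + 1) = ∑ i ∈ Finset.range (m + 1), Nat.choose m i * B i)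
    (S : Finset ℕ) (hS : S.Nonempty) :
    cnt (fun l => ¬ Occ3123 l) S
      = ∑ i ∈ Finset.range (S.card - 1 + 1),
          Nat.choose (S.card - 1) i * (B i * B (S.card - 1 - i)) := by
  set M := S.max' hS with hM
  set S' := S.erase M with hS'def
  have hcard : S'.card = S.card - 1 := by
    rw [hS'def, Finset.card_erase_of_mem (S.max'_mem hS)]
  rw [cnt_split (fun l => ¬ Occ312 l) (fun l => ¬ Occ123 l) (fun l => ¬ Occ3123 l) S hS
    (by
      intro α β hα hβ
      show ¬ Occ3123 (α ++ S.max' hS :: β) ↔ ¬ Occ312 α ∧ ¬ Occ123 β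
      rw [occ3123_split hα hβ]
      tauto)]
  have : ∀ T ∈ S'.powerset,
      cnt (fun l => ¬ Occ312 l) T * cnt (fun l => ¬ Occ123 l) (S' \ T)
        = B T.card * B (S'.card - T.card) := by
    intro T hT
    have hsub := Finset.mem_powerset.mp hT
    rw [cnt_notOcc312 B hB0 hBrec, cnt_notOcc123 B hB0 hBrec, Finset.card_sdiff_of_subset hsub]
  rw [Finset.sum_congr rfl this, sum_powerset_card (fun j => B j * B (S'.card - j)), hcard]

end A3123

open scoped Classical

/-- If `B` is the sequence of Bell numbers and `a n` the number of
`(3-12-3)`-avoiding permutations of length `n`, then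
`a (n+1) = ∑ C(n,i) Bᵢ B_{n-i}`. -/
theorem count_avoid_3123 (B : ℕ → ℕ) (hB0 : B 0 = 1)
    (hBrec : ∀ m, B (m + 1) = ∑ i ∈ Finset.range (m + 1), Nat.choose m i * B i)
    (n : ℕ) :
    Nat.card {l : List ℕ // IsPermOf (n + 1) l ∧ ¬ Occ3123 l} =
      ∑ i ∈ Finset.range (n + 1), Nat.choose n i * (B i * B (n - i)) := by

  set S : Finset ℕ := ((List.range (n + 1)).map (· + 1)).toFinset with hSdef
  have hnd : ((List.range (n + 1)).map (· + 1)).Nodup :=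
    (List.nodup_range (n := n + 1)).map (fun a b h => by omega)
  have hval : S.val = ↑((List.range (n + 1)).map (· + 1)) := A3123.toFinset_val_of_nodup hnd
  have hcard : S.card = n + 1 := by
    rw [hSdef, List.toFinset_card_of_nodup hnd, List.length_map, List.length_range]
  have hS : S.Nonempty := Finset.card_pos.mp (by omega)
  have hequiv : {l : List ℕ // IsPermOf (n + 1) l ∧ ¬ Occ3123 l} ≃
      {l : List ℕ //
        l ∈ (S.sort (· ≤ ·)).permutations.toFinset.filter (fun l => ¬ Occ3123 l)} := by
    apply Equiv.subtypeEquivRight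
    intro l
    simp only [Finset.mem_filter, A3123.mem_perms, hval, Multiset.coe_eq_coe]
    exact Iff.rfl
  have hcnt : Nat.card {l : List ℕ // IsPermOf (n + 1) l ∧ ¬ Occ3123 l}
      = A3123.cnt (fun l => ¬ Occ3123 l) S := by
    rw [A3123.cnt, Finset.filter_congr_decidable, ← Nat.card_eq_finsetCard]
    exact Nat.card_congr hequiv
  rw [hcnt, A3123.cnt_notOcc3123 B hB0 hBrec S hS, hcard]
  simp only [Nat.add_sub_cancel]
end

section
/- Let f_n be the number of permutations of length n avoiding a contiguous pattern σ, and g_n the number avoiding k-σ, where k is greater than all letters of σ. Then g_0 = 1 and g_{n+1} = Σ_{i=0}^{n} C(n,i) g_i f_{n-i} for all n ≥ 0. -/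
attribute [local instance] Classical.propDecidable

namespace CAKR


noncomputable def permsF (s : Finset ℕ) : Finset (List ℕ) :=
  ((s.sort (· ≤ ·)).permutations).toFinset

lemma mem_permsF {s : Finset ℕ} {l : List ℕ} :
    l ∈ permsF s ↔ l.Nodup ∧ l.toFinset = s := by
  rw [permsF, List.mem_toFinset, List.mem_permutations]
  constructor
  · intro h
    refine ⟨h.nodup_iff.2 (s.sort_nodup _), ?_⟩
    rw [List.toFinset_eq_of_perm _ _ h, Finset.sort_toFinset]
  · rintro ⟨h1, h2⟩
    exact List.perm_of_nodup_nodup_toFinset_eq h1 (s.sort_nodup _)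
      (by rw [h2, Finset.sort_toFinset])

noncomputable def baseF (n : ℕ) : Finset ℕ := ((List.range n).map (· + 1)).toFinset

lemma base_nodup (n : ℕ) : ((List.range n).map (· + 1)).Nodup :=
  (List.nodup_range).map (fun a b => by omega)

lemma mem_baseF {n a : ℕ} : a ∈ baseF n ↔ 1 ≤ a ∧ a ≤ n := by
  simp only [baseF, List.mem_toFinset, List.mem_map, List.mem_range]
  constructor
  · rintro ⟨i, hi, rfl⟩; omega
  · intro h; exact ⟨a - 1, by omega, by omega⟩

lemma card_baseF (n : ℕ) : (baseF n).card = n := by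
  rw [baseF, List.toFinset_card_of_nodup (base_nodup n)]
  simp

/-- standardization: counting pattern-invariant lists on any value set -/
lemma card_filter_std (S : Finset ℕ) {i : ℕ} (hSi : S.card = i) (P : List ℕ → Prop)
    (hP : ∀ (l : List ℕ) (φ ψ : ℕ → ℕ),
      (∀ a ∈ l, ∀ b ∈ l, a < b ↔ φ a < φ b) → (∀ a ∈ l, ψ (φ a) = a) →
      (P l ↔ P (l.map φ))) :
    ((permsF S).filter P).card = ((permsF (baseF i)).filter P).card := by
  set e := S.orderIsoOfFin hSi with he
  set φ : ℕ → ℕ := fun a => if h : a ∈ S then (e.symm ⟨a, h⟩ : ℕ) + 1 else 0 with hφdef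
  set ψ : ℕ → ℕ := fun v => if h : v - 1 < i then (e ⟨v - 1, h⟩ : ℕ) else 0 with hψdef
  have hψφ : ∀ a ∈ S, ψ (φ a) = a := by
    intro a ha
    simp only [hφdef, hψdef, ha, dif_pos]
    have h1 : ((e.symm ⟨a, ha⟩ : Fin i) : ℕ) + 1 - 1 = (e.symm ⟨a, ha⟩ : Fin i) := by omega
    rw [dif_pos (by rw [h1]; exact (e.symm ⟨a, ha⟩).isLt)]
    simp_rw [h1]
    simp
  have hφord : ∀ a ∈ S, ∀ b ∈ S, a < b ↔ φ a < φ b := by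
    intro a ha b hb
    simp only [hφdef, ha, hb, dif_pos]
    rw [Nat.add_lt_add_iff_right]
    rw [← Fin.lt_iff_val_lt_val, e.symm.lt_iff_lt]
    exact Iff.symm Subtype.mk_lt_mk
  have hφS : ∀ a ∈ S, φ a ∈ baseF i := by
    intro a ha
    rw [mem_baseF]
    simp only [hφdef, ha, dif_pos]
    have := (e.symm ⟨a, ha⟩).isLt
    omega
  have hψmem : ∀ v ∈ baseF i, ψ v ∈ S := by
    intro v hv
    rw [mem_baseF] at hv
    simp only [hψdef, dif_pos (show v - 1 < i by omega)]
    exact (e ⟨v - 1, by omega⟩).2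
  have hφψ : ∀ v ∈ baseF i, φ (ψ v) = v := by
    intro v hv
    rw [mem_baseF] at hv
    simp only [hψdef, dif_pos (show v - 1 < i by omega)]
    simp only [hφdef, (e ⟨v - 1, by omega⟩).2, dif_pos]
    rw [show (⟨(e ⟨v - 1, by omega⟩ : ℕ), _⟩ : {x // x ∈ S}) = e ⟨v - 1, by omega⟩ from rfl]
    simp
    omega
  have hψord : ∀ v ∈ baseF i, ∀ u ∈ baseF i, v < u ↔ ψ v < ψ u := by
    intro v hv u hu
    rw [← hφψ v hv, ← hφψ u hu, ← hφord _ (hψmem v hv) _ (hψmem u hu)]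
    rw [hφψ v hv, hφψ u hu]
  -- the bijection
  refine Finset.card_bij' (fun l _ => l.map φ) (fun l _ => l.map ψ) ?_ ?_ ?_ ?_
  · intro l hl
    rw [Finset.mem_filter, mem_permsF] at hl ⊢
    obtain ⟨⟨hnd, hts⟩, hPl⟩ := hl
    have hmem : ∀ a ∈ l, a ∈ S := fun a ha => hts ▸ List.mem_toFinset.2 ha
    refine ⟨⟨hnd.map_on ?_, ?_⟩, ?_⟩
    · intro x hx y hy hxy
      by_contra hne
      rcases lt_or_gt_of_ne hne with h | h
      · exact absurd hxy (Nat.ne_of_lt ((hφord _ (hmem x hx) _ (hmem y hy)).1 h))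
      · exact absurd hxy.symm (Nat.ne_of_lt ((hφord _ (hmem y hy) _ (hmem x hx)).1 h))
    · ext v
      simp only [List.mem_toFinset, List.mem_map]
      constructor
      · rintro ⟨a, ha, rfl⟩; exact hφS a (hmem a ha)
      · intro hv
        refine ⟨ψ v, ?_, hφψ v hv⟩
        rw [← List.mem_toFinset, hts]; exact hψmem v hv
    · exact (hP l φ ψ (fun a ha b hb => hφord a (hmem a ha) b (hmem b hb))
        (fun a ha => hψφ a (hmem a ha))).1 hPl
  · intro l hl
    rw [Finset.mem_filter, mem_permsF] at hl ⊢
    obtain ⟨⟨hnd, hts⟩, hPl⟩ := hl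
    have hmem : ∀ a ∈ l, a ∈ baseF i := fun a ha => hts ▸ List.mem_toFinset.2 ha
    refine ⟨⟨hnd.map_on ?_, ?_⟩, ?_⟩
    · intro x hx y hy hxy
      by_contra hne
      rcases lt_or_gt_of_ne hne with h | h
      · exact absurd hxy (Nat.ne_of_lt ((hψord _ (hmem x hx) _ (hmem y hy)).1 h))
      · exact absurd hxy.symm (Nat.ne_of_lt ((hψord _ (hmem y hy) _ (hmem x hx)).1 h))
    · ext a
      simp only [List.mem_toFinset, List.mem_map]
      constructor
      · rintro ⟨v, hv, rfl⟩; exact hψmem v (hmem v hv)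
      · intro ha
        refine ⟨φ a, ?_, hψφ a ha⟩
        rw [← List.mem_toFinset, hts]; exact hφS a ha
    · exact (hP l ψ φ (fun a ha b hb => hψord a (hmem a ha) b (hmem b hb))
        (fun a ha => hφψ a (hmem a ha))).1 hPl
  · intro l hl
    rw [Finset.mem_filter, mem_permsF] at hl
    have hmem : ∀ a ∈ l, a ∈ S := fun a ha => hl.1.2 ▸ List.mem_toFinset.2 ha
    show (l.map φ).map ψ = l
    rw [List.map_map]
    have : l.map (ψ ∘ φ) = l.map id := List.map_congr_left (fun a ha => hψφ a (hmem a ha))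
    simpa using this
  · intro l hl
    rw [Finset.mem_filter, mem_permsF] at hl
    have hmem : ∀ a ∈ l, a ∈ baseF i := fun a ha => hl.1.2 ▸ List.mem_toFinset.2 ha
    show (l.map ψ).map φ = l
    rw [List.map_map]
    have : l.map (φ ∘ ψ) = l.map id := List.map_congr_left (fun a ha => hφψ a (hmem a ha))
    simpa using this



lemma formsPOP_ne_nil {σ w : List ℕ} (hσ : σ ≠ []) (h : FormsPOP σ w) : w ≠ [] := by
  intro hw
  have := h.1
  rw [hw] at this
  simp at this
  exact hσ (List.eq_nil_of_length_eq_zero this.symm)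

/-- uniqueness of splitting at an element not in the left parts -/
lemma split_unique {M : ℕ} : ∀ {A A' B B' : List ℕ}, M ∉ A → M ∉ A' →
    A ++ M :: B = A' ++ M :: B' → A = A' ∧ B = B' := by
  intro A
  induction A with
  | nil =>
    intro A' B B' _ hA' h
    cases A' with
    | nil => simpa using h
    | cons a t =>
      simp only [List.nil_append, List.cons_append, List.cons.injEq] at h
      exact absurd (h.1 ▸ (List.mem_cons_self : a ∈ a :: t)) hA'
  | cons a t ih =>
    intro A' B B' hA hA' h
    cases A' with
    | nil =>
      simp only [List.cons_append, List.nil_append, List.cons.injEq] at h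
      exact absurd (h.1 ▸ (List.mem_cons_self : a ∈ a :: t)) hA
    | cons a' t' =>
      simp only [List.cons_append, List.cons.injEq] at h
      obtain ⟨rfl, h2⟩ := h
      obtain ⟨h3, h4⟩ := ih (fun hm => hA (List.mem_cons_of_mem _ hm))
        (fun hm => hA' (List.mem_cons_of_mem _ hm)) h2
      exact ⟨by rw [h3], h4⟩

/-- the key splitting equivalence -/
lemma ks_split {σ : List ℕ} (hσ : σ ≠ []) {A B : List ℕ} {M : ℕ}
    (hA : ∀ a ∈ A, a < M) (hB : ∀ b ∈ B, b < M) :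
    OccursKS σ (A ++ M :: B) ↔ OccursKS σ A ∨ OccursContig σ B := by
  constructor
  · rintro ⟨A', x, B', w, C', heq, hw, hlt⟩
    have hwne : w ≠ [] := formsPOP_ne_nil hσ hw
    have hMw : M ∉ w := by
      intro hMem
      have hx : x ∈ A ++ M :: B := by
        rw [heq]; simp
      have : x ≤ M := by
        rcases List.mem_append.1 hx with h | h
        · exact le_of_lt (hA _ h)
        · rcases List.mem_cons.1 h with rfl | h
          · exact le_refl _
          · exact le_of_lt (hB _ h)
      exact absurd (hlt M hMem) (not_lt.2 this)
    -- heq : A ++ M :: B = A' ++ x :: (B' ++ w ++ C')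
    rcases List.append_eq_append_iff.1 heq with ⟨a', ha1, ha2⟩ | ⟨c', hc1, hc2⟩
    · -- A' = A ++ a', M :: B = a' ++ x :: (B' ++ w ++ C')
      cases a' with
      | nil =>
        simp only [List.nil_append, List.cons.injEq] at ha2
        obtain ⟨rfl, rfl⟩ := ha2
        right; exact ⟨B', w, C', rfl, hw⟩
      | cons m t =>
        simp only [List.cons_append, List.cons.injEq] at ha2
        obtain ⟨rfl, rfl⟩ := ha2
        right
        exact ⟨t ++ [x] ++ B', w, C', by simp, hw⟩
    · -- A = A' ++ c', c' ++ M :: B = x :: (B' ++ w ++ C')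
      cases c' with
      | nil =>
        simp only [List.nil_append, List.cons.injEq] at hc2
        obtain ⟨rfl, rfl⟩ := hc2
        right; exact ⟨B', w, C', rfl, hw⟩
      | cons x t =>
        simp only [List.cons_append, List.cons.injEq] at hc2
        obtain ⟨rfl, ht⟩ := hc2
        -- ht : B' ++ w ++ C' = t ++ M :: B, hc1 : A = A' ++ x :: t
        have hxA : x ∈ A := by rw [hc1]; simp
        rw [List.append_assoc] at ht
        rcases List.append_eq_append_iff.1 ht with ⟨u, hu1, hu2⟩ | ⟨u, hu1, hu2⟩
        · -- t = B' ++ u, w ++ C' = u ++ M :: B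
          rcases List.append_eq_append_iff.1 hu2 with ⟨v, hv1, hv2⟩ | ⟨v, hv1, hv2⟩
          · -- u = w ++ v, C' = v ++ M :: B
            left
            exact ⟨A', x, B', w, v, by rw [hc1, hu1, hv1]; simp, hw, hlt⟩
          · -- w = u ++ v, M :: B = v ++ C'
            cases v with
            | nil =>
              simp only [List.append_nil] at hv1
              left
              exact ⟨A', x, B', w, [], by rw [hc1, hu1, hv1]; simp, hw, hlt⟩
            | cons m v' =>
              exfalso
              simp only [List.cons_append, List.cons.injEq] at hv2
              exact hMw (hv2.1 ▸ (hv1 ▸ List.mem_append_right u ((List.mem_cons_self : m ∈ m :: v'))))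
        · -- B' = t ++ u, M :: B = u ++ (w ++ C')
          cases u with
          | nil =>
            exfalso
            simp only [List.nil_append] at hu2
            cases w with
            | nil => exact formsPOP_ne_nil hσ hw rfl
            | cons m w' =>
              simp only [List.cons_append, List.cons.injEq] at hu2
              exact hMw (hu2.1 ▸ (List.mem_cons_self : m ∈ m :: w'))
          | cons m u' =>
            simp only [List.cons_append, List.cons.injEq] at hu2
            right
            exact ⟨u', w, C', by rw [hu2.2, List.append_assoc], hw⟩
  · rintro (⟨A', x, B', w, C', heq, hw, hlt⟩ | ⟨P, w, Q, heq, hw⟩)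
    · exact ⟨A', x, B', w, C' ++ M :: B, by rw [heq]; simp, hw, hlt⟩
    · refine ⟨A, M, P, w, Q, by rw [heq], hw, fun y hy => hB y ?_⟩
      rw [heq]; simp [hy]


lemma isPermOf_iff {n : ℕ} {l : List ℕ} :
    IsPermOf n l ↔ l.Nodup ∧ l.toFinset = baseF n := by
  constructor
  · intro h
    exact ⟨h.nodup_iff.2 (base_nodup n), List.toFinset_eq_of_perm _ _ h⟩
  · rintro ⟨h1, h2⟩
    exact List.perm_of_nodup_nodup_toFinset_eq h1 (base_nodup n) h2

lemma card_subtype (n : ℕ) (P : List ℕ → Prop) :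
    Nat.card {l : List ℕ // IsPermOf n l ∧ P l} =
      ((permsF (baseF n)).filter P).card := by
  have h : {l : List ℕ | IsPermOf n l ∧ P l} = ↑((permsF (baseF n)).filter P) := by
    ext l
    simp only [Set.mem_setOf_eq, Finset.coe_filter, mem_permsF, isPermOf_iff]
  rw [← Set.ncard_coe_finset, ← h, ← Nat.card_coe_set_eq]
  rfl

lemma baseF_succ (n : ℕ) : baseF (n + 1) = insert (n + 1) (baseF n) := by
  ext a
  simp only [mem_baseF, Finset.mem_insert]
  omega

lemma not_mem_baseF (n : ℕ) : n + 1 ∉ baseF n := by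
  rw [mem_baseF]; omega

section MapLemmas

lemma formsPOP_map {σ w : List ℕ} {φ : ℕ → ℕ}
    (hφ : ∀ a ∈ w, ∀ b ∈ w, a < b ↔ φ a < φ b) (h : FormsPOP σ w) :
    FormsPOP σ (w.map φ) := by
  refine ⟨by simp [h.1], fun i j hi hj hlt => ?_⟩
  have hi' : i < w.length := h.1 ▸ hi
  have hj' : j < w.length := h.1 ▸ hj
  rw [List.getD_eq_getElem _ _ (by simpa using hi'),
    List.getD_eq_getElem _ _ (by simpa using hj')]
  simp only [List.getElem_map]
  rw [← hφ _ (List.getElem_mem _) _ (List.getElem_mem _)]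
  have := h.2 i j hi hj hlt
  rwa [List.getD_eq_getElem _ _ hi', List.getD_eq_getElem _ _ hj'] at this

lemma occursContig_map {σ π : List ℕ} {φ : ℕ → ℕ}
    (hφ : ∀ a ∈ π, ∀ b ∈ π, a < b ↔ φ a < φ b) (h : OccursContig σ π) :
    OccursContig σ (π.map φ) := by
  obtain ⟨A, w, B, rfl, hw⟩ := h
  exact ⟨A.map φ, w.map φ, B.map φ, by simp,
    formsPOP_map (fun a ha b hb => hφ a (by simp [ha]) b (by simp [hb])) hw⟩

lemma occursKS_map {σ π : List ℕ} {φ : ℕ → ℕ}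
    (hφ : ∀ a ∈ π, ∀ b ∈ π, a < b ↔ φ a < φ b) (h : OccursKS σ π) :
    OccursKS σ (π.map φ) := by
  obtain ⟨A, x, B, w, C, rfl, hw, hlt⟩ := h
  refine ⟨A.map φ, φ x, B.map φ, w.map φ, C.map φ, by simp,
    formsPOP_map (fun a ha b hb => hφ a (by simp [ha]) b (by simp [hb])) hw, ?_⟩
  intro y hy
  rw [List.mem_map] at hy
  obtain ⟨a, ha, rfl⟩ := hy
  rw [← hφ a (by simp [ha]) x (by simp)]
  exact hlt a ha

lemma map_id_of_inv {l : List ℕ} {φ ψ : ℕ → ℕ} (hψ : ∀ a ∈ l, ψ (φ a) = a) :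
    (l.map φ).map ψ = l := by
  rw [List.map_map]
  have : l.map (ψ ∘ φ) = l.map id := List.map_congr_left (fun a ha => hψ a ha)
  simpa using this

lemma inv_order_iff {l : List ℕ} {φ ψ : ℕ → ℕ}
    (hφ : ∀ a ∈ l, ∀ b ∈ l, a < b ↔ φ a < φ b)
    (hψ : ∀ a ∈ l, ψ (φ a) = a) :
    ∀ a ∈ l.map φ, ∀ b ∈ l.map φ, a < b ↔ ψ a < ψ b := by
  rintro a ha b hb
  rw [List.mem_map] at ha hb
  obtain ⟨a0, ha0, rfl⟩ := ha
  obtain ⟨b0, hb0, rfl⟩ := hb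
  rw [hψ _ ha0, hψ _ hb0, hφ _ ha0 _ hb0]

lemma occursContig_map_iff {σ π : List ℕ} {φ ψ : ℕ → ℕ}
    (hφ : ∀ a ∈ π, ∀ b ∈ π, a < b ↔ φ a < φ b)
    (hψ : ∀ a ∈ π, ψ (φ a) = a) :
    OccursContig σ (π.map φ) ↔ OccursContig σ π := by
  constructor
  · intro h
    have := occursContig_map (inv_order_iff hφ hψ) h
    rwa [map_id_of_inv hψ] at this
  · exact occursContig_map hφ

lemma occursKS_map_iff {σ π : List ℕ} {φ ψ : ℕ → ℕ}
    (hφ : ∀ a ∈ π, ∀ b ∈ π, a < b ↔ φ a < φ b)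
    (hψ : ∀ a ∈ π, ψ (φ a) = a) :
    OccursKS σ (π.map φ) ↔ OccursKS σ π := by
  constructor
  · intro h
    have := occursKS_map (inv_order_iff hφ hψ) h
    rwa [map_id_of_inv hψ] at this
  · exact occursKS_map hφ

end MapLemmas



lemma filter_card_irrel {α : Type*} {p : α → Prop} {h1 h2 : DecidablePred p} {s : Finset α} :
    (@Finset.filter α p h1 s).card = (@Finset.filter α p h2 s).card := by
  rw [Subsingleton.elim h1 h2]

section Main

variable {σ : List ℕ} (hσ : σ ≠ [])
include hσ

lemma key_card (n : ℕ) :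
    ((permsF (baseF (n + 1))).filter (fun l => ¬ OccursKS σ l)).card =
      ∑ S ∈ (baseF n).powerset,
        ((permsF S).filter (fun l => ¬ OccursKS σ l)).card *
        ((permsF ((baseF n) \ S)).filter (fun l => ¬ OccursContig σ l)).card := by
  classical
  set P1 : List ℕ → Prop := fun l => ¬ OccursKS σ l with hP1
  set P2 : List ℕ → Prop := fun l => ¬ OccursContig σ l with hP2
  set pairs : Finset (List ℕ × List ℕ) :=
    (baseF n).powerset.biUnion
      (fun S => ((permsF S).filter P1) ×ˢ ((permsF ((baseF n) \ S)).filter P2)) with hpairs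
  have hmem_pairs : ∀ p : List ℕ × List ℕ, p ∈ pairs ↔
      ∃ S ⊆ baseF n, (p.1.Nodup ∧ p.1.toFinset = S ∧ P1 p.1) ∧
        (p.2.Nodup ∧ p.2.toFinset = (baseF n) \ S ∧ P2 p.2) := by
    intro p
    simp only [hpairs, Finset.mem_biUnion, Finset.mem_powerset, Finset.mem_product,
      Finset.mem_filter, mem_permsF]
    constructor
    · rintro ⟨S, hS, ⟨⟨h1, h2⟩, h3⟩, ⟨h4, h5⟩, h6⟩
      exact ⟨S, hS, ⟨h1, h2, h3⟩, h4, h5, h6⟩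
    · rintro ⟨S, hS, ⟨h1, h2, h3⟩, h4, h5, h6⟩
      exact ⟨S, hS, ⟨⟨h1, h2⟩, h3⟩, ⟨h4, h5⟩, h6⟩
  have hcard : pairs.card = ∑ S ∈ (baseF n).powerset,
      ((permsF S).filter P1).card * ((permsF ((baseF n) \ S)).filter P2).card := by
    rw [hpairs, Finset.card_biUnion]
    · exact Finset.sum_congr rfl (fun S _ => Finset.card_product _ _)
    · intro S hS T hT hST
      rw [Function.onFun, Finset.disjoint_left]
      rintro ⟨A, B⟩ hA hB
      rw [Finset.mem_product, Finset.mem_filter, mem_permsF] at hA hB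
      exact hST (hA.1.1.2 ▸ hB.1.1.2)
  rw [← hcard]
  symm
  refine Finset.card_bij (fun p _ => p.1 ++ (n + 1) :: p.2) ?_ ?_ ?_
  · rintro ⟨A, B⟩ hp
    rw [hmem_pairs] at hp
    obtain ⟨S, hS, ⟨hA1, hA2, hA3⟩, hB1, hB2, hB3⟩ := hp
    have hAin : ∀ a ∈ A, a ∈ baseF n := fun a ha =>
      hS (hA2 ▸ List.mem_toFinset.2 ha)
    have hBin : ∀ b ∈ B, b ∈ baseF n := fun b hb =>
      Finset.sdiff_subset (hB2 ▸ List.mem_toFinset.2 hb)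
    have hAlt : ∀ a ∈ A, a < n + 1 := fun a ha => by
      have := (mem_baseF).1 (hAin a ha); omega
    have hBlt : ∀ b ∈ B, b < n + 1 := fun b hb => by
      have := (mem_baseF).1 (hBin b hb); omega
    rw [Finset.mem_filter, mem_permsF]
    refine ⟨⟨?_, ?_⟩, ?_⟩
    · rw [List.nodup_append]
      refine ⟨hA1, ?_, ?_⟩
      · rw [List.nodup_cons]
        exact ⟨fun h => by have := hBlt _ h; omega, hB1⟩
      · rintro a ha _ hb rfl
        rcases List.mem_cons.1 hb with rfl | hb
        · have := hAlt _ ha; omega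
        · have h1 : a ∈ S := hA2 ▸ List.mem_toFinset.2 ha
          have h2 : a ∈ (baseF n) \ S := hB2 ▸ List.mem_toFinset.2 hb
          exact (Finset.mem_sdiff.1 h2).2 h1
    · rw [baseF_succ]
      ext a
      simp only [List.toFinset_append, List.toFinset_cons, Finset.mem_union,
        Finset.mem_insert, hA2, hB2, Finset.mem_sdiff]
      constructor
      · rintro (h | h | h)
        · exact Or.inr (hS h)
        · exact Or.inl h
        · exact Or.inr h.1
      · rintro (h | h)
        · exact Or.inr (Or.inl h)
        · by_cases haS : a ∈ S
          · exact Or.inl haS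
          · exact Or.inr (Or.inr ⟨h, haS⟩)
    · show ¬ OccursKS σ (A ++ (n + 1) :: B)
      rw [ks_split hσ hAlt hBlt]
      push_neg
      exact ⟨hA3, hB3⟩
  · rintro ⟨A, B⟩ hp ⟨A', B'⟩ hp' heq
    rw [hmem_pairs] at hp hp'
    obtain ⟨S, hS, ⟨_, hA2, _⟩, _⟩ := hp
    obtain ⟨S', hS', ⟨_, hA2', _⟩, _⟩ := hp'
    have hnA : n + 1 ∉ A := fun h => not_mem_baseF n (hS (hA2 ▸ List.mem_toFinset.2 h))
    have hnA' : n + 1 ∉ A' := fun h => not_mem_baseF n (hS' (hA2' ▸ List.mem_toFinset.2 h))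
    obtain ⟨h1, h2⟩ := split_unique hnA hnA' heq
    exact Prod.ext h1 h2
  · intro π hπ
    rw [Finset.mem_filter, mem_permsF] at hπ
    obtain ⟨⟨hnd, hts⟩, hP⟩ := hπ
    have hmem : n + 1 ∈ π := by
      rw [← List.mem_toFinset, hts, mem_baseF]; omega
    obtain ⟨A, B, rfl⟩ := List.append_of_mem hmem
    rw [List.nodup_append] at hnd
    obtain ⟨hA1, hcons, hdisj⟩ := hnd
    rw [List.nodup_cons] at hcons
    obtain ⟨hnB, hB1⟩ := hcons
    have hnA : n + 1 ∉ A := fun h => hdisj _ h _ List.mem_cons_self rfl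
    have hAin : ∀ a ∈ A, a ∈ baseF n := by
      intro a ha
      have : a ∈ baseF (n + 1) := hts ▸ List.mem_toFinset.2 (by simp [ha])
      rw [baseF_succ, Finset.mem_insert] at this
      rcases this with rfl | h
      · exact absurd ha hnA
      · exact h
    have hBin : ∀ b ∈ B, b ∈ baseF n := by
      intro b hb
      have : b ∈ baseF (n + 1) := hts ▸ List.mem_toFinset.2 (by simp [hb])
      rw [baseF_succ, Finset.mem_insert] at this
      rcases this with rfl | h
      · exact absurd hb hnB
      · exact h
    have hAlt : ∀ a ∈ A, a < n + 1 := fun a ha => by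
      have := (mem_baseF).1 (hAin a ha); omega
    have hBlt : ∀ b ∈ B, b < n + 1 := fun b hb => by
      have := (mem_baseF).1 (hBin b hb); omega
    refine ⟨(A, B), ?_, rfl⟩
    rw [hmem_pairs]
    refine ⟨A.toFinset, ?_, ⟨hA1, rfl, ?_⟩, hB1, ?_, ?_⟩
    · intro a ha
      exact hAin a (List.mem_toFinset.1 ha)
    · rw [ks_split hσ hAlt hBlt] at hP
      push_neg at hP
      exact hP.1
    · ext b
      simp only [List.mem_toFinset, Finset.mem_sdiff]
      constructor
      · intro hb
        exact ⟨hBin b hb, fun h => hdisj _ h _ (List.mem_cons_of_mem _ hb) rfl⟩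
      · rintro ⟨hb1, hb2⟩
        have : b ∈ baseF (n + 1) := by rw [baseF_succ]; exact Finset.mem_insert_of_mem hb1
        rw [← hts, List.mem_toFinset] at this
        rcases List.mem_append.1 this with h | h
        · exact absurd h hb2
        · rcases List.mem_cons.1 h with rfl | h
          · exact absurd hb1 (not_mem_baseF n)
          · exact h
    · rw [ks_split hσ hAlt hBlt] at hP
      push_neg at hP
      exact hP.2

end Main

end CAKR

/-- If `f n` counts `σ`-avoiders of length `n` and `g n` counts `(k-σ)`-avoiders,
then `g 0 = 1` and `g (n+1) = ∑ C(n,i) gᵢ f_{n-i}`. -/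
theorem count_avoid_ks_rec (σ : List ℕ) (hσ : σ ≠ [])
    (f g : ℕ → ℕ)
    (hf : ∀ n, f n = Nat.card {l : List ℕ // IsPermOf n l ∧ ¬ OccursContig σ l})
    (hg : ∀ n, g n = Nat.card {l : List ℕ // IsPermOf n l ∧ ¬ OccursKS σ l}) :
    g 0 = 1 ∧
    ∀ n, g (n + 1) = ∑ i ∈ Finset.range (n + 1), Nat.choose n i * (g i * f (n - i)) := by
  open CAKR in
  have hg' : ∀ n, g n = ((permsF (baseF n)).filter (fun l => ¬ OccursKS σ l)).card :=
    fun n => (hg n).trans ((card_subtype n _).trans filter_card_irrel)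
  have hf' : ∀ n, f n = ((permsF (baseF n)).filter (fun l => ¬ OccursContig σ l)).card :=
    fun n => (hf n).trans ((card_subtype n _).trans filter_card_irrel)
  constructor
  · rw [hg' 0]
    have hb0 : CAKR.baseF 0 = ∅ := by
      ext a; simp [CAKR.mem_baseF]; omega
    have : (CAKR.permsF (CAKR.baseF 0)).filter (fun l => ¬ OccursKS σ l) = {[]} := by
      ext l
      simp only [Finset.mem_filter, CAKR.mem_permsF, hb0, Finset.mem_singleton]
      constructor
      · rintro ⟨⟨h1, h2⟩, h3⟩
        exact List.toFinset_eq_empty_iff l |>.1 h2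
      · rintro rfl
        refine ⟨⟨List.nodup_nil, by simp⟩, ?_⟩
        rintro ⟨A, x, B, w, C, heq, -, -⟩
        have := congrArg List.length heq
        simp at this
    rw [this, Finset.card_singleton]
  · intro n
    rw [hg' (n + 1), CAKR.key_card hσ n]
    have hstep : ∀ S ∈ (CAKR.baseF n).powerset,
        ((CAKR.permsF S).filter (fun l => ¬ OccursKS σ l)).card *
        ((CAKR.permsF ((CAKR.baseF n) \ S)).filter (fun l => ¬ OccursContig σ l)).card =
        g S.card * f (n - S.card) := by
      intro S hS
      rw [Finset.mem_powerset] at hS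
      have h1 : ((CAKR.permsF S).filter (fun l => ¬ OccursKS σ l)).card = g S.card := by
        rw [hg' S.card]
        exact CAKR.filter_card_irrel.trans ((CAKR.card_filter_std S rfl _ (fun l φ ψ hφ hψ =>
          (not_congr (CAKR.occursKS_map_iff hφ hψ)).symm)).trans CAKR.filter_card_irrel)
      have hcards : ((CAKR.baseF n) \ S).card = n - S.card := by
        rw [Finset.card_sdiff_of_subset hS, CAKR.card_baseF]
      have h2 : ((CAKR.permsF ((CAKR.baseF n) \ S)).filter
          (fun l => ¬ OccursContig σ l)).card = f (n - S.card) := by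
        rw [hf' (n - S.card)]
        exact CAKR.filter_card_irrel.trans ((CAKR.card_filter_std _ hcards _ (fun l φ ψ hφ hψ =>
          (not_congr (CAKR.occursContig_map_iff hφ hψ)).symm)).trans CAKR.filter_card_irrel)
      rw [h1, h2]
    rw [Finset.sum_congr rfl hstep]
    have hpc : (CAKR.baseF n).card = n := CAKR.card_baseF n
    rw [Finset.sum_powerset, hpc]
    refine Finset.sum_congr rfl ?_
    intro i hi
    have : ∀ S ∈ Finset.powersetCard i (CAKR.baseF n),
        g S.card * f (n - S.card) = g i * f (n - i) := by
      intro S hS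
      rw [(Finset.mem_powersetCard.1 hS).2]
    rw [Finset.sum_congr rfl this, Finset.sum_const, Finset.card_powersetCard, hpc,
      smul_eq_mul]
end
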